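/- arXiv:2505.01748 — 3 statements merged into one kernel-verified Lean document; each statement's English description precedes it below -/
import Mathlib

section
/- Let s ≥ 1 be an integer, σ > 0 a real number, and let u : [0,1] → ℝ be of class C^{2s}, satisfying the boundary conditions u(0) = u(1) = 0 and u^{(j)}(0) = u^{(j)}(1) = 0 for every integer j with s ≤ j ≤ 2s − 2. If (−1)^{s} u^{(2s)}(x) − σ u''(x) = 0 for all x ∈ [0,1], then u is identically zero. -/
/-- Injectivity of the operator L_σ u = (−1)^s u^{(2s)} − σ u'' on [0,1] with the
boundary conditions u = u^{(s)} = u^{(s+1)} = … = u^{(2s−2)} = 0 at x = 0 and x = 1. -/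
theorem stmt_9 (s : ℕ) (hs : 1 ≤ s) (σ : ℝ) (hσ : 0 < σ) (u : ℝ → ℝ)
    (hu : ContDiffOn ℝ (2 * s : ℕ) u (Set.Icc 0 1))
    (hb0 : u 0 = 0) (hb1 : u 1 = 0)
    (hbj : ∀ j : ℕ, s ≤ j → j ≤ 2 * s - 2 →
      iteratedDerivWithin j u (Set.Icc 0 1) 0 = 0 ∧
      iteratedDerivWithin j u (Set.Icc 0 1) 1 = 0)
    (hode : ∀ x ∈ Set.Icc (0:ℝ) 1,
      (-1 : ℝ) ^ s * iteratedDerivWithin (2 * s) u (Set.Icc 0 1) x -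
        σ * iteratedDerivWithin 2 u (Set.Icc 0 1) x = 0) :
    ∀ x ∈ Set.Icc (0:ℝ) 1, u x = 0 := by
  set S : Set ℝ := Set.Icc 0 1 with hS
  have hUD : UniqueDiffOn ℝ S := uniqueDiffOn_Icc one_pos
  set g : ℕ → ℝ → ℝ := fun j => iteratedDerivWithin j u S with hg
  have hg0 : g 0 = u := iteratedDerivWithin_zero
  have hbj' : ∀ j : ℕ, s ≤ j → j ≤ 2 * s - 2 → g j 0 = 0 ∧ g j 1 = 0 := hbj
  -- continuity of derivatives
  have hcont : ∀ j, j ≤ 2 * s → ContinuousOn (g j) S := fun j hj =>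
    hu.continuousOn_iteratedDerivWithin (by exact_mod_cast hj) hUD
  -- derivatives at interior points
  have hderiv : ∀ j, j < 2 * s → ∀ x ∈ Set.Ioo (0:ℝ) 1,
      HasDerivAt (g j) (g (j+1) x) x := by
    intro j hj x hx
    have hxS : x ∈ S := Set.Ioo_subset_Icc_self hx
    have hd : DifferentiableWithinAt ℝ (g j) S x :=
      hu.differentiableOn_iteratedDerivWithin (by exact_mod_cast hj) hUD x hxS
    have hmem : S ∈ nhds x := Icc_mem_nhds hx.1 hx.2
    have := (hd.hasDerivWithinAt).hasDerivAt hmem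
    rwa [← iteratedDerivWithin_succ] at this
  have hInt : ∀ (f : ℝ → ℝ), ContinuousOn f S → IntervalIntegrable f MeasureTheory.volume 0 1 := by
    intro f hf
    apply ContinuousOn.intervalIntegrable
    rwa [Set.uIcc_of_le (zero_le_one)]
  -- integration by parts
  have ibp : ∀ a b : ℕ, a + 1 ≤ 2 * s → b + 1 ≤ 2 * s →
      g a 0 * g b 0 = 0 → g a 1 * g b 1 = 0 →
      ∫ x in (0:ℝ)..1, g (a+1) x * g b x = - ∫ x in (0:ℝ)..1, g a x * g (b+1) x := by
    intro a b ha hb h0 h1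
    have hc1 : ContinuousOn (fun x => g (a+1) x * g b x) S :=
      (hcont (a+1) ha).mul (hcont b (le_trans (Nat.le_succ b) hb))
    have hc2 : ContinuousOn (fun x => g a x * g (b+1) x) S :=
      (hcont a (le_trans (Nat.le_succ a) ha)).mul (hcont (b+1) hb)
    have hftc : ∫ x in (0:ℝ)..1, (g (a+1) x * g b x + g a x * g (b+1) x)
        = g a 1 * g b 1 - g a 0 * g b 0 :=
      intervalIntegral.integral_eq_sub_of_hasDeriv_right_of_le
        (f := fun x => g a x * g b x)
        (f' := fun x => g (a+1) x * g b x + g a x * g (b+1) x) zero_le_one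
        ((hcont a (le_trans (Nat.le_succ a) ha)).mul
          (hcont b (le_trans (Nat.le_succ b) hb)))
        (fun x hx => (((hderiv a ha x hx).mul (hderiv b hb x hx)).hasDerivWithinAt))
        (hInt _ (hc1.add hc2))
    rw [intervalIntegral.integral_add (hInt _ hc1) (hInt _ hc2), h0, h1, sub_zero] at hftc
    linarith
  -- the iterated integration by parts chain
  have key : ∀ k, k ≤ s →
      ∫ x in (0:ℝ)..1, g (s+k) x * g (s-k) x
        = (-1)^k * ∫ x in (0:ℝ)..1, g s x * g s x := by
    intro k
    induction k with
    | zero => intro _; simp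
    | succ k ih =>
      intro hk
      have hk' : k ≤ s := le_trans (Nat.le_succ k) hk
      have hbd : ∀ e : ℝ, g (s+k) e * g (s-(k+1)) e = 0 →
          True := fun _ _ => trivial
      have hbde : ∀ e ∈ ({0,1} : Set ℝ), g (s+k) e * g (s-(k+1)) e = 0 := by
        intro e he
        rcases Nat.lt_or_ge (k+1) s with h | h
        · -- k+1 < s : first factor vanishes by hbj
          have h1 : s ≤ s + k := Nat.le_add_right s k
          have h2 : s + k ≤ 2 * s - 2 := by omega
          rcases he with he | he
          · subst he; rw [(hbj' (s+k) h1 h2).1]; ring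
          · simp only [Set.mem_singleton_iff] at he; subst he
            rw [(hbj' (s+k) h1 h2).2]; ring
        · -- k+1 = s : second factor is u
          have : s - (k+1) = 0 := by omega
          rw [this, hg0]
          rcases he with he | he
          · subst he; rw [hb0]; ring
          · simp only [Set.mem_singleton_iff] at he; subst he; rw [hb1]; ring
      have step := ibp (s+k) (s-(k+1)) (by omega) (by omega)
        (hbde 0 (by simp)) (hbde 1 (by simp))
      have e1 : s + (k+1) = (s+k) + 1 := by omega
      have e2 : s - (k+1) + 1 = s - k := by omega
      rw [e1, step, e2, ih hk']
      ring
  -- I_s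
  have hIs := key s le_rfl
  rw [Nat.sub_self] at hIs
  have h2s : s + s = 2 * s := by omega
  rw [h2s, hg0] at hIs
  -- rewrite g (2s) using the ODE
  have hode' : ∀ x ∈ S, g (2*s) x = (-1:ℝ)^s * (σ * g 2 x) := by
    intro x hx
    have h : (-1:ℝ)^s * g (2*s) x - σ * g 2 x = 0 := hode x hx
    rcases Nat.even_or_odd s with hpar | hpar
    · rw [hpar.neg_one_pow] at h ⊢; linarith
    · rw [hpar.neg_one_pow] at h ⊢; linarith
  have hcongr : ∫ x in (0:ℝ)..1, g (2*s) x * u x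
      = (-1:ℝ)^s * (σ * ∫ x in (0:ℝ)..1, g 2 x * u x) := by
    rw [← intervalIntegral.integral_const_mul, ← intervalIntegral.integral_const_mul]
    apply intervalIntegral.integral_congr
    intro x hx
    rw [Set.uIcc_of_le zero_le_one] at hx
    show g (2*s) x * u x = (-1:ℝ)^s * (σ * (g 2 x * u x))
    rw [hode' x hx]; ring
  -- ∫ g2 * u = - ∫ g1 * g1
  have hibp1 : ∫ x in (0:ℝ)..1, g 2 x * u x = - ∫ x in (0:ℝ)..1, g 1 x * g 1 x := by
    have := ibp 1 0 (by omega) (by omega)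
      (by rw [hg0, hb0]; ring) (by rw [hg0, hb1]; ring)
    simpa [hg0] using this
  -- conclude ∫ g1^2 = 0
  have hnn1 : (0:ℝ) ≤ ∫ x in (0:ℝ)..1, g 1 x * g 1 x :=
    intervalIntegral.integral_nonneg zero_le_one (fun x _ => mul_self_nonneg _)
  have hnns : (0:ℝ) ≤ ∫ x in (0:ℝ)..1, g s x * g s x :=
    intervalIntegral.integral_nonneg zero_le_one (fun x _ => mul_self_nonneg _)
  have hmain : ∫ x in (0:ℝ)..1, g s x * g s x = - σ * ∫ x in (0:ℝ)..1, g 1 x * g 1 x := by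
    rw [hcongr, hibp1] at hIs
    rcases Nat.even_or_odd s with hpar | hpar
    · rw [hpar.neg_one_pow] at hIs; linarith
    · rw [hpar.neg_one_pow] at hIs; linarith
  have hzero : ∫ x in (0:ℝ)..1, g 1 x * g 1 x = 0 := by nlinarith
  -- g 1 = 0 on S
  have hg1c : ContinuousOn (g 1) S := hcont 1 (by omega)
  have hg1zero : ∀ x ∈ S, g 1 x = 0 := by
    have hInt1 : IntervalIntegrable (fun x => g 1 x * g 1 x) MeasureTheory.volume 0 1 :=
      hInt _ (hg1c.mul hg1c)
    rw [intervalIntegral.integral_of_le zero_le_one] at hzero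
    have hae : (fun x => g 1 x * g 1 x) =ᵐ[MeasureTheory.volume.restrict (Set.Ioc (0:ℝ) 1)] 0 := by
      rw [← MeasureTheory.integral_eq_zero_iff_of_nonneg_ae]
      · exact hzero
      · exact Filter.Eventually.of_forall (fun x => mul_self_nonneg _)
      · exact (hInt1.1)
    have haeIcc : (fun x => g 1 x * g 1 x) =ᵐ[MeasureTheory.volume.restrict S] 0 := by
      have : MeasureTheory.volume.restrict (Set.Ioc (0:ℝ) 1)
          = MeasureTheory.volume.restrict S :=
        MeasureTheory.Measure.restrict_congr_set MeasureTheory.Ioc_ae_eq_Icc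
      rwa [this] at hae
    have := MeasureTheory.Measure.eqOn_Icc_of_ae_eq MeasureTheory.volume
      (zero_ne_one) haeIcc (hg1c.mul hg1c) continuousOn_const
    intro x hx
    have h := this hx
    simp only [Pi.zero_apply] at h
    exact mul_self_eq_zero.mp h
  -- now conclude u = 0 via FTC
  intro x hx
  have hftc2 : ∫ t in (0:ℝ)..x, g 1 t = u x - u 0 := by
    apply intervalIntegral.integral_eq_sub_of_hasDeriv_right_of_le hx.1
    · exact hu.continuousOn.mono (Set.Icc_subset_Icc le_rfl hx.2)
    · intro t ht
      have htI : t ∈ Set.Ioo (0:ℝ) 1 := ⟨ht.1, lt_of_lt_of_le ht.2 hx.2⟩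
      have := hderiv 0 (by omega) t htI
      rw [hg0] at this
      exact this.hasDerivWithinAt
    · apply ContinuousOn.intervalIntegrable
      apply hg1c.mono
      rw [Set.uIcc_of_le hx.1]
      exact Set.Icc_subset_Icc le_rfl hx.2
  have hz : ∫ t in (0:ℝ)..x, g 1 t = 0 := by
    rw [intervalIntegral.integral_congr (g := fun _ => (0:ℝ)) ?_]
    · simp
    · intro t ht
      rw [Set.uIcc_of_le hx.1] at ht
      exact hg1zero t ⟨ht.1, le_trans ht.2 hx.2⟩
  rw [hz] at hftc2
  rw [hb0] at hftc2
  linarith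
end

section
/- Define a : ℝ³ × ℝ³ → ℝ³ × ℝ³ by a(p, q) = ( q × (p × q), (p × q) × p ), where × denotes the cross product on ℝ³. Then a is differentiable and its derivative at every point is a symmetric linear operator on ℝ⁶ ≅ ℝ³ × ℝ³: for every w ∈ ℝ³ × ℝ³ and all u, u' ∈ ℝ³ × ℝ³, ⟨Da(w) u, u'⟩ = ⟨u, Da(w) u'⟩, where ⟨·,·⟩ is the Euclidean inner product on ℝ³ × ℝ³. Equivalently, writing a = (a₁, …, a₆) as a function of w = (w₁, …, w₆) ∈ ℝ⁶, one has ∂_{w_j} a_i = ∂_{w_i} a_j for all i, j ∈ {1, …, 6}. -/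
noncomputable section

/-- The nonlinearity of the stationary Euler system:
a(p,q) = (q × (p × q), (p × q) × p). -/
def eulerA : (Fin 3 → ℝ) × (Fin 3 → ℝ) → (Fin 3 → ℝ) × (Fin 3 → ℝ) :=
  fun w => (crossProduct w.2 (crossProduct w.1 w.2),
            crossProduct (crossProduct w.1 w.2) w.1)

/-- Euclidean inner product on ℝ³ × ℝ³ ≅ ℝ⁶. -/
def dot6 (u v : (Fin 3 → ℝ) × (Fin 3 → ℝ)) : ℝ :=
  (∑ i, u.1 i * v.1 i) + (∑ i, u.2 i * v.2 i)

abbrev E3' := Fin 3 → ℝ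

/-- Cross product as a continuous bilinear map. -/
noncomputable def Bc : E3' →L[ℝ] E3' →L[ℝ] E3' :=
  LinearMap.toContinuousLinearMap
    { toFun := fun p => LinearMap.toContinuousLinearMap (crossProduct p)
      map_add' := by intros; ext; simp
      map_smul' := by intros; ext; simp }

@[simp] lemma Bc_apply (p q : E3') : Bc p q = crossProduct p q := by
  simp [Bc]

lemma euler_hasFDerivAt (w : E3' × E3') :
    ∃ D : (E3' × E3') →L[ℝ] E3' × E3', HasFDerivAt eulerA D w ∧ ∀ u : E3' × E3',
      D u = (crossProduct u.2 (crossProduct w.1 w.2) + crossProduct w.2 (crossProduct u.1 w.2)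
               + crossProduct w.2 (crossProduct w.1 u.2),
             crossProduct (crossProduct u.1 w.2) w.1 + crossProduct (crossProduct w.1 u.2) w.1
               + crossProduct (crossProduct w.1 w.2) u.1) := by
  have heq : eulerA = fun w : E3' × E3' => (Bc w.2 (Bc w.1 w.2), Bc (Bc w.1 w.2) w.1) := by
    funext w; simp [eulerA]
  have hfst : HasFDerivAt (fun y : E3' × E3' => y.1) (ContinuousLinearMap.fst ℝ E3' E3') w :=
    hasFDerivAt_fst
  have hsnd : HasFDerivAt (fun y : E3' × E3' => y.2) (ContinuousLinearMap.snd ℝ E3' E3') w :=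
    hasFDerivAt_snd
  have hc1 : HasFDerivAt (fun y : E3' × E3' => Bc y.1)
      (Bc.comp (ContinuousLinearMap.fst ℝ E3' E3')) w :=
    (Bc.comp (ContinuousLinearMap.fst ℝ E3' E3')).hasFDerivAt
  have h1 := hc1.clm_apply hsnd
  have hc2 : HasFDerivAt (fun y : E3' × E3' => Bc y.2)
      (Bc.comp (ContinuousLinearMap.snd ℝ E3' E3')) w :=
    (Bc.comp (ContinuousLinearMap.snd ℝ E3' E3')).hasFDerivAt
  have h2 := hc2.clm_apply h1
  have hc3 : HasFDerivAt (fun y : E3' × E3' => Bc (Bc y.1 y.2)) (Bc.comp _) w :=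
    Bc.hasFDerivAt.comp w h1
  have h3 := hc3.clm_apply hfst
  refine ⟨_, heq ▸ h2.prodMk h3, fun u => ?_⟩
  ext i <;> fin_cases i <;>
    simp [ContinuousLinearMap.add_apply, ContinuousLinearMap.comp_apply,
      ContinuousLinearMap.flip_apply, LinearMap.map_add, cross_apply, Fin.sum_univ_three] <;>
    ring

/-- The map a is differentiable and its derivative at every point is a symmetric
linear operator on ℝ⁶ (equivalently ∂_{w_j}a_i = ∂_{w_i}a_j for all i, j). -/
theorem stmt_12 :
    Differentiable ℝ eulerA ∧
      ∀ w u u' : (Fin 3 → ℝ) × (Fin 3 → ℝ),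
        dot6 (fderiv ℝ eulerA w u) u' = dot6 u (fderiv ℝ eulerA w u') := by
  constructor
  · intro w
    obtain ⟨D, hD, -⟩ := euler_hasFDerivAt w
    exact hD.differentiableAt
  · intro w u u'
    obtain ⟨D, hD, hval⟩ := euler_hasFDerivAt w
    rw [hD.fderiv, hval u, hval u']
    simp only [dot6, cross_apply, Fin.sum_univ_three, Pi.add_apply, Matrix.cons_val_zero,
      Matrix.cons_val_one, Matrix.head_cons, Matrix.cons_val_two, Matrix.tail_cons]
    ring

end
end

section
/- Let s ≥ 5 be an integer and let a = (a₁, a₂) : [0,1] × ℝ × ℝ² → ℝ², (x₁, x₂, z₁, z₂) ↦ a(x, z), be of class C^{s+1}, 1-periodic in x₂, satisfying the symmetry ∂_{z₂}a₁ = ∂_{z₁}a₂. Then there exist constants C > 0 and r₀ > 0 such that for every F ∈ C^∞([0,1] × ℝ, ℝ), 1-periodic in x₂, with F(0,·) = F(1,·) = 0 and ‖F‖_{H^s(𝒫)} ≤ r₀, one has |I₂ + I₃| ≤ C ‖F‖³_{H^s(𝒫)}, where I₂ = ∫_𝒫 s Σ_{i=1}^{2} Σ_{q=1}^{2} Σ_{p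 ≠ i} (∂_{z_p}∂_{z_q} a_i)(x, ∇F) (∂_{x₂}^{s−1}∂_{x_p} F)(∂_{x₂}∂_{x_q} F)(∂_{x₂}^{s}∂_{x_i} F) dx₁ dx₂ and I₃ = ∫_𝒫 s Σ_{i=1}^{2} Σ_{q=1}^{2} (∂_{z_i}∂_{z_q} a_i)(x, ∇F) (∂_{x₂}^{s−1}∂_{x_i} F)(∂_{x₂}∂_{x_q} F)(∂_{x₂}^{s}∂_{x_i} F) dx₁ dx₂. -/
open MeasureTheory

noncomputable section

/-- Partial derivative in the first variable. -/
def pd₁ (u : ℝ × ℝ → ℝ) : ℝ × ℝ → ℝ := fun x => deriv (fun t => u (t, x.2)) x.1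

/-- Partial derivative in the second variable. -/
def pd₂ (u : ℝ × ℝ → ℝ) : ℝ × ℝ → ℝ := fun x => deriv (fun t => u (x.1, t)) x.2

/-- The periodicity cell 𝒫 = (0,1)². -/
def unitSq : Set (ℝ × ℝ) := Set.Ioo 0 1 ×ˢ Set.Ioo 0 1

/-- Square of the L²(𝒫) norm. -/
def L2sq (w : ℝ × ℝ → ℝ) : ℝ := ∫ x in unitSq, (w x) ^ 2

/-- L²(𝒫) norm. -/
def l2 (w : ℝ × ℝ → ℝ) : ℝ := Real.sqrt (L2sq w)

/-- Square of the H^m(𝒫) norm: ∑_{β₁+β₂ ≤ m} ‖∂₁^{β₁}∂₂^{β₂}w‖²_{L²}. -/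
def Hsq (m : ℕ) (w : ℝ × ℝ → ℝ) : ℝ :=
  ∑ b ∈ Finset.range (m + 1), ∑ c ∈ Finset.range (m + 1 - b), L2sq (pd₁^[b] (pd₂^[c] w))

/-- L^∞(𝒫) norm (supremum of |w| over 𝒫). -/
def Linf (w : ℝ × ℝ → ℝ) : ℝ := sSup ((fun x => |w x|) '' unitSq)

/-- The strip [0,1] × ℝ. -/
def strip : Set (ℝ × ℝ) := Set.Icc 0 1 ×ˢ (Set.univ : Set ℝ)

/-- 1-periodicity in the second variable. -/
def Per1 (u : ℝ × ℝ → ℝ) : Prop := ∀ x₁ x₂ : ℝ, u (x₁, x₂ + 1) = u (x₁, x₂)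

/-- Homogeneous Dirichlet condition at x₁ = 0 and x₁ = 1. -/
def Dir (u : ℝ × ℝ → ℝ) : Prop := ∀ x₂ : ℝ, u (0, x₂) = 0 ∧ u (1, x₂) = 0

/-- Domain of the coefficient map a: ([0,1] × ℝ) × ℝ². -/
def slab4 : Set ((ℝ × ℝ) × ℝ × ℝ) :=
  (Set.Icc (0:ℝ) 1 ×ˢ (Set.univ : Set ℝ)) ×ˢ (Set.univ : Set (ℝ × ℝ))

/-- Partial derivative in the explicit variable x₁. -/
def dx₁ (b : (ℝ × ℝ) × ℝ × ℝ → ℝ) : (ℝ × ℝ) × ℝ × ℝ → ℝ :=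
  fun w => deriv (fun t => b ((t, w.1.2), w.2)) w.1.1

/-- Partial derivative in the explicit variable x₂. -/
def dx₂ (b : (ℝ × ℝ) × ℝ × ℝ → ℝ) : (ℝ × ℝ) × ℝ × ℝ → ℝ :=
  fun w => deriv (fun t => b ((w.1.1, t), w.2)) w.1.2

/-- Partial derivative in the variable z₁. -/
def dz₁ (b : (ℝ × ℝ) × ℝ × ℝ → ℝ) : (ℝ × ℝ) × ℝ × ℝ → ℝ :=
  fun w => deriv (fun t => b (w.1, (t, w.2.2))) w.2.1

/-- Partial derivative in the variable z₂. -/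
def dz₂ (b : (ℝ × ℝ) × ℝ × ℝ → ℝ) : (ℝ × ℝ) × ℝ × ℝ → ℝ :=
  fun w => deriv (fun t => b (w.1, (w.2.1, t))) w.2.2

/-- First component of a. -/
def A₁ (a : (ℝ × ℝ) × ℝ × ℝ → ℝ × ℝ) : (ℝ × ℝ) × ℝ × ℝ → ℝ := fun w => (a w).1

/-- Second component of a. -/
def A₂ (a : (ℝ × ℝ) × ℝ × ℝ → ℝ × ℝ) : (ℝ × ℝ) × ℝ × ℝ → ℝ := fun w => (a w).2

/-- The gradient ∇F = (∂₁F, ∂₂F). -/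
def gradc (F : ℝ × ℝ → ℝ) : ℝ × ℝ → ℝ × ℝ := fun x => (pd₁ F x, pd₂ F x)

/-- 1-periodicity of a in x₂. -/
def PerA (a : (ℝ × ℝ) × ℝ × ℝ → ℝ × ℝ) : Prop :=
  ∀ (x₁ x₂ : ℝ) (z : ℝ × ℝ), a ((x₁, x₂ + 1), z) = a ((x₁, x₂), z)

/-- Local coercivity of the Jacobian J_a of a in z:
p·(J_a(x,z)p) ≥ ρ p₁² for x₁ ∈ [0,1] and |z| ≤ ρ. -/
def CoercA (a : (ℝ × ℝ) × ℝ × ℝ → ℝ × ℝ) (ρ : ℝ) : Prop :=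
  ∀ x₁ ∈ Set.Icc (0:ℝ) 1, ∀ (x₂ : ℝ) (z : ℝ × ℝ), z.1 ^ 2 + z.2 ^ 2 ≤ ρ ^ 2 →
    ∀ p : ℝ × ℝ,
      dz₁ (A₁ a) ((x₁, x₂), z) * p.1 * p.1 + dz₂ (A₁ a) ((x₁, x₂), z) * p.1 * p.2 +
        dz₁ (A₂ a) ((x₁, x₂), z) * p.2 * p.1 + dz₂ (A₂ a) ((x₁, x₂), z) * p.2 * p.2 ≥
      ρ * p.1 ^ 2

/-- a(x₁,x₂,0,0) = (0,0). -/
def ZeroA (a : (ℝ × ℝ) × ℝ × ℝ → ℝ × ℝ) : Prop :=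
  ∀ x₁ x₂ : ℝ, a ((x₁, x₂), (0, 0)) = (0, 0)

/-- The symmetry hypothesis ∂_{z₂}a₁ = ∂_{z₁}a₂. -/
def SymA (a : (ℝ × ℝ) × ℝ × ℝ → ℝ × ℝ) : Prop :=
  ∀ w ∈ slab4, dz₂ (A₁ a) w = dz₁ (A₂ a) w

/-- The integral I₂ (sum over i, q and the index p ≠ i). -/
def I₂ (s : ℕ) (a : (ℝ × ℝ) × ℝ × ℝ → ℝ × ℝ) (F : ℝ × ℝ → ℝ) : ℝ :=
  ∫ x in unitSq, (s : ℝ) *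
    (dz₁ (dz₂ (A₁ a)) (x, gradc F x) * pd₂^[s - 1] (pd₂ F) x * pd₂ (pd₁ F) x *
        pd₂^[s] (pd₁ F) x +
      dz₂ (dz₂ (A₁ a)) (x, gradc F x) * pd₂^[s - 1] (pd₂ F) x * pd₂ (pd₂ F) x *
        pd₂^[s] (pd₁ F) x +
      dz₁ (dz₁ (A₂ a)) (x, gradc F x) * pd₂^[s - 1] (pd₁ F) x * pd₂ (pd₁ F) x *
        pd₂^[s] (pd₂ F) x +
      dz₂ (dz₁ (A₂ a)) (x, gradc F x) * pd₂^[s - 1] (pd₁ F) x * pd₂ (pd₂ F) x *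
        pd₂^[s] (pd₂ F) x)

/-- The integral I₃ (sum over i, q, with p = i). -/
def I₃ (s : ℕ) (a : (ℝ × ℝ) × ℝ × ℝ → ℝ × ℝ) (F : ℝ × ℝ → ℝ) : ℝ :=
  ∫ x in unitSq, (s : ℝ) *
    (dz₁ (dz₁ (A₁ a)) (x, gradc F x) * pd₂^[s - 1] (pd₁ F) x * pd₂ (pd₁ F) x *
        pd₂^[s] (pd₁ F) x +
      dz₂ (dz₁ (A₁ a)) (x, gradc F x) * pd₂^[s - 1] (pd₁ F) x * pd₂ (pd₂ F) x *
        pd₂^[s] (pd₁ F) x +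
      dz₁ (dz₂ (A₂ a)) (x, gradc F x) * pd₂^[s - 1] (pd₂ F) x * pd₂ (pd₁ F) x *
        pd₂^[s] (pd₂ F) x +
      dz₂ (dz₂ (A₂ a)) (x, gradc F x) * pd₂^[s - 1] (pd₂ F) x * pd₂ (pd₂ F) x *
        pd₂^[s] (pd₂ F) x)


def oS : Set (ℝ × ℝ) := Set.Ioo 0 1 ×ˢ (Set.univ : Set ℝ)

lemma isOpen_oS : IsOpen oS := isOpen_Ioo.prod isOpen_univ

lemma oS_subset_strip : oS ⊆ strip :=
  Set.prod_mono Set.Ioo_subset_Icc_self le_rfl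

lemma unitSq_subset_oS : unitSq ⊆ oS :=
  Set.prod_mono le_rfl (Set.subset_univ _)

lemma mem_oS {x : ℝ × ℝ} : x ∈ oS ↔ x.1 ∈ Set.Ioo (0:ℝ) 1 := by
  simp [oS, Set.mem_prod]

lemma measurableSet_unitSq : MeasurableSet unitSq :=
  (measurableSet_Ioo.prod measurableSet_Ioo)

lemma volume_unitSq : volume unitSq = 1 := by
  rw [unitSq, MeasureTheory.Measure.volume_eq_prod, MeasureTheory.Measure.prod_prod]
  simp [Real.volume_Ioo]

lemma uniqueDiffOn_strip : UniqueDiffOn ℝ strip :=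
  (uniqueDiffOn_Icc one_pos).prod uniqueDiffOn_univ

lemma strip_mem_nhds {x : ℝ × ℝ} (hx : x ∈ oS) : strip ∈ nhds x :=
  Filter.mem_of_superset (isOpen_oS.mem_nhds hx) oS_subset_strip

/-- Integrability of bounded continuous functions on the unit square. -/
lemma integrableOn_unitSq {g : ℝ × ℝ → ℝ} (hc : ContinuousOn g unitSq)
    {B : ℝ} (hB : ∀ x ∈ unitSq, |g x| ≤ B) : IntegrableOn g unitSq := by
  have hm : AEStronglyMeasurable g (volume.restrict unitSq) :=
    hc.aestronglyMeasurable measurableSet_unitSq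
  haveI : IsFiniteMeasure (volume.restrict unitSq) :=
    ⟨by rw [Measure.restrict_apply_univ, volume_unitSq]; exact ENNReal.one_lt_top⟩
  refine Integrable.mono' (integrable_const B) hm ?_
  rw [MeasureTheory.ae_restrict_iff' measurableSet_unitSq]
  filter_upwards with x hx
  exact hB x hx

/-- The invariant: w coincides on the open strip with a function smooth on the closed strip. -/
def Nice (w : ℝ × ℝ → ℝ) : Prop :=
  ∃ E : ℝ × ℝ → ℝ, ContDiffOn ℝ (⊤:ℕ∞) E strip ∧ Set.EqOn w E oS

lemma Nice.continuousOn {w : ℝ × ℝ → ℝ} (h : Nice w) : ContinuousOn w oS := by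
  obtain ⟨E, hE, heq⟩ := h
  exact ((hE.continuousOn).mono oS_subset_strip).congr heq

lemma Nice.bounded {w : ℝ × ℝ → ℝ} (h : Nice w) : ∃ B : ℝ, ∀ x ∈ unitSq, |w x| ≤ B := by
  obtain ⟨E, hE, heq⟩ := h
  have hcomp : IsCompact (Set.Icc (0:ℝ) 1 ×ˢ Set.Icc (0:ℝ) 1) :=
    isCompact_Icc.prod isCompact_Icc
  have hsub : Set.Icc (0:ℝ) 1 ×ˢ Set.Icc (0:ℝ) 1 ⊆ strip :=
    Set.prod_mono le_rfl (Set.subset_univ _)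
  obtain ⟨C, hC⟩ := hcomp.exists_bound_of_continuousOn (hE.continuousOn.mono hsub)
  refine ⟨C, fun x hx => ?_⟩
  rw [heq (unitSq_subset_oS hx)]
  exact hC x ⟨Set.Ioo_subset_Icc_self hx.1, Set.Ioo_subset_Icc_self hx.2⟩

lemma Nice.contDiffAt {w : ℝ × ℝ → ℝ} (h : Nice w) {x : ℝ × ℝ} (hx : x ∈ oS) :
    ∃ E : ℝ × ℝ → ℝ, ContDiffOn ℝ (⊤:ℕ∞) E strip ∧ Set.EqOn w E oS ∧
      ContDiffAt ℝ (⊤:ℕ∞) E x := by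
  obtain ⟨E, hE, heq⟩ := h
  exact ⟨E, hE, heq, hE.contDiffAt (strip_mem_nhds hx)⟩

lemma eventuallyEq_of_eqOn_oS {w E : ℝ × ℝ → ℝ} (heq : Set.EqOn w E oS)
    {x : ℝ × ℝ} (hx : x ∈ oS) :
    (fun t => w (t, x.2)) =ᶠ[nhds x.1] (fun t => E (t, x.2)) := by
  have hopen : IsOpen {t : ℝ | (t, x.2) ∈ oS} := isOpen_oS.preimage (by fun_prop)
  have hmem : x.1 ∈ {t : ℝ | (t, x.2) ∈ oS} := hx
  filter_upwards [hopen.mem_nhds hmem] with t ht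
  exact heq ht

lemma line2_eq_of_eqOn_oS {w E : ℝ × ℝ → ℝ} (heq : Set.EqOn w E oS)
    {x : ℝ × ℝ} (hx : x ∈ oS) :
    (fun t => w (x.1, t)) = (fun t => E (x.1, t)) := by
  funext t
  exact heq (show (x.1, t) ∈ oS from mem_oS.mpr (mem_oS.mp hx))

/-- Differentiability of the horizontal/vertical line restrictions, with plain `fderiv`. -/
lemma one_le_coe_top : ((⊤:ℕ∞) : WithTop ℕ∞) ≠ 0 := by
  simp

lemma hasDerivAt_line₁ {w E : ℝ × ℝ → ℝ} {x : ℝ × ℝ}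
    (hE : ContDiffAt ℝ (⊤:ℕ∞) E x) (heq : Set.EqOn w E oS) (hx : x ∈ oS) :
    HasDerivAt (fun t => w (t, x.2)) (fderiv ℝ E x (1, 0)) x.1 := by
  have hdE : HasFDerivAt E (fderiv ℝ E x) x :=
    (hE.differentiableAt one_le_coe_top).hasFDerivAt
  have hline : HasDerivAt (fun t : ℝ => ((t, x.2) : ℝ × ℝ)) ((1:ℝ), (0:ℝ)) x.1 :=
    HasDerivAt.prodMk (hasDerivAt_id x.1) (hasDerivAt_const x.1 x.2)
  have : HasDerivAt (fun t => E (t, x.2)) (fderiv ℝ E x (1, 0)) x.1 := by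
    have := hdE.comp_hasDerivAt x.1 hline
    simpa [Function.comp_def] using this
  exact this.congr_of_eventuallyEq (eventuallyEq_of_eqOn_oS heq hx)

lemma hasDerivAt_line₂ {w E : ℝ × ℝ → ℝ} {x : ℝ × ℝ}
    (hE : ContDiffAt ℝ (⊤:ℕ∞) E x) (heq : Set.EqOn w E oS) (hx : x ∈ oS) :
    HasDerivAt (fun t => w (x.1, t)) (fderiv ℝ E x (0, 1)) x.2 := by
  have hdE : HasFDerivAt E (fderiv ℝ E x) x :=
    (hE.differentiableAt one_le_coe_top).hasFDerivAt
  have hline : HasDerivAt (fun t : ℝ => ((x.1, t) : ℝ × ℝ)) ((0:ℝ), (1:ℝ)) x.2 :=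
    HasDerivAt.prodMk (hasDerivAt_const x.2 x.1) (hasDerivAt_id x.2)
  have h2 : HasDerivAt (fun t => E (x.1, t)) (fderiv ℝ E x (0, 1)) x.2 := by
    have := hdE.comp_hasDerivAt x.2 hline
    simpa [Function.comp_def] using this
  rw [line2_eq_of_eqOn_oS heq hx]
  exact h2

lemma pd₁_eq_fderiv {w E : ℝ × ℝ → ℝ} {x : ℝ × ℝ}
    (hE : ContDiffAt ℝ (⊤:ℕ∞) E x) (heq : Set.EqOn w E oS) (hx : x ∈ oS) :
    pd₁ w x = fderiv ℝ E x (1, 0) := (hasDerivAt_line₁ hE heq hx).deriv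

lemma pd₂_eq_fderiv {w E : ℝ × ℝ → ℝ} {x : ℝ × ℝ}
    (hE : ContDiffAt ℝ (⊤:ℕ∞) E x) (heq : Set.EqOn w E oS) (hx : x ∈ oS) :
    pd₂ w x = fderiv ℝ E x (0, 1) := (hasDerivAt_line₂ hE heq hx).deriv

lemma Nice.hasDerivAt₁ {w : ℝ × ℝ → ℝ} (h : Nice w) {x : ℝ × ℝ} (hx : x ∈ oS) :
    HasDerivAt (fun t => w (t, x.2)) (pd₁ w x) x.1 := by
  obtain ⟨E, hE, heq, hEx⟩ := h.contDiffAt hx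
  rw [pd₁_eq_fderiv hEx heq hx]
  exact hasDerivAt_line₁ hEx heq hx

lemma Nice.hasDerivAt₂ {w : ℝ × ℝ → ℝ} (h : Nice w) {x : ℝ × ℝ} (hx : x ∈ oS) :
    HasDerivAt (fun t => w (x.1, t)) (pd₂ w x) x.2 := by
  obtain ⟨E, hE, heq, hEx⟩ := h.contDiffAt hx
  rw [pd₂_eq_fderiv hEx heq hx]
  exact hasDerivAt_line₂ hEx heq hx


lemma top_add_one_le : ((⊤:ℕ∞) : WithTop ℕ∞) + 1 ≤ ((⊤:ℕ∞) : WithTop ℕ∞) := by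
  norm_cast

lemma Nice.npd₁ {w : ℝ × ℝ → ℝ} (h : Nice w) : Nice (pd₁ w) := by
  obtain ⟨E, hE, heq⟩ := h
  refine ⟨fun x => fderivWithin ℝ E strip x (1, 0), ?_, ?_⟩
  · exact (hE.fderivWithin uniqueDiffOn_strip top_add_one_le).clm_apply contDiffOn_const
  · intro x hx
    have hEx := hE.contDiffAt (strip_mem_nhds hx)
    show pd₁ w x = fderivWithin ℝ E strip x (1, 0)
    rw [pd₁_eq_fderiv hEx heq hx, fderivWithin_of_mem_nhds (strip_mem_nhds hx)]

lemma Nice.npd₂ {w : ℝ × ℝ → ℝ} (h : Nice w) : Nice (pd₂ w) := by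
  obtain ⟨E, hE, heq⟩ := h
  refine ⟨fun x => fderivWithin ℝ E strip x (0, 1), ?_, ?_⟩
  · exact (hE.fderivWithin uniqueDiffOn_strip top_add_one_le).clm_apply contDiffOn_const
  · intro x hx
    have hEx := hE.contDiffAt (strip_mem_nhds hx)
    show pd₂ w x = fderivWithin ℝ E strip x (0, 1)
    rw [pd₂_eq_fderiv hEx heq hx, fderivWithin_of_mem_nhds (strip_mem_nhds hx)]

lemma Nice.niter {w : ℝ × ℝ → ℝ} (h : Nice w) (n : ℕ) : Nice (pd₂^[n] w) := by
  induction n with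
  | zero => exact h
  | succ n ih => rw [Function.iterate_succ_apply']; exact ih.npd₂

/-- congruence for pd₁ on the open strip -/
lemma pd₁_congr {w₁ w₂ : ℝ × ℝ → ℝ} (h : Set.EqOn w₁ w₂ oS) {x : ℝ × ℝ} (hx : x ∈ oS) :
    pd₁ w₁ x = pd₁ w₂ x :=
  Filter.EventuallyEq.deriv_eq (eventuallyEq_of_eqOn_oS h hx)

lemma pd₂_congr {w₁ w₂ : ℝ × ℝ → ℝ} (h : Set.EqOn w₁ w₂ oS) {x : ℝ × ℝ} (hx : x ∈ oS) :
    pd₂ w₁ x = pd₂ w₂ x := by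
  unfold pd₂
  rw [line2_eq_of_eqOn_oS h hx]

/-- Periodicity propagation -/
lemma Per1.ppd₁ {w : ℝ × ℝ → ℝ} (h : Per1 w) : Per1 (pd₁ w) := by
  intro x₁ x₂
  unfold pd₁
  simp only
  congr 1
  funext t
  exact h t x₂

lemma Per1.ppd₂ {w : ℝ × ℝ → ℝ} (h : Per1 w) : Per1 (pd₂ w) := by
  intro x₁ x₂
  unfold pd₂
  simp only
  have : (fun t => w (x₁, t + 1)) = fun t => w (x₁, t) := by
    funext t; exact h x₁ t
  calc deriv (fun t => w (x₁, t)) (x₂ + 1)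
      = deriv (fun t => w (x₁, t + 1)) x₂ := (deriv_comp_add_const _ 1 x₂).symm
    _ = deriv (fun t => w (x₁, t)) x₂ := by rw [this]

lemma Per1.iter_pd₂ {w : ℝ × ℝ → ℝ} (h : Per1 w) (n : ℕ) : Per1 (pd₂^[n] w) := by
  induction n with
  | zero => exact h
  | succ n ih => rw [Function.iterate_succ_apply']; exact ih.ppd₂

/-- Clairaut on the open strip. -/
lemma Nice.pd_comm {w : ℝ × ℝ → ℝ} (h : Nice w) {x : ℝ × ℝ} (hx : x ∈ oS) :
    pd₁ (pd₂ w) x = pd₂ (pd₁ w) x := by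
  obtain ⟨E, hE, heq⟩ := h
  set G := fderiv ℝ E with hG
  -- E has fderiv G y at every y in oS, eventually near x
  have hEy : ∀ᶠ y in nhds x, HasFDerivAt E (G y) y := by
    filter_upwards [isOpen_oS.mem_nhds hx] with y hy
    exact ((hE.contDiffAt (strip_mem_nhds hy)).differentiableAt one_le_coe_top).hasFDerivAt
  have hGx : ContDiffAt ℝ (⊤:ℕ∞) E x := hE.contDiffAt (strip_mem_nhds hx)
  have hGdiff : ContDiffAt ℝ (⊤:ℕ∞) G x := by
    apply hGx.fderiv_right
    exact_mod_cast le_top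
  have hGfd : HasFDerivAt G (fderiv ℝ G x) x :=
    (hGdiff.differentiableAt one_le_coe_top).hasFDerivAt
  have hsymm := second_derivative_symmetric_of_eventually hEy hGfd
  -- pd₂ w agrees on oS with y ↦ G y (0,1); pd₁ w with y ↦ G y (1,0)
  have heq₂ : Set.EqOn (pd₂ w) (fun y => G y (0, 1)) oS := fun y hy =>
    pd₂_eq_fderiv (hE.contDiffAt (strip_mem_nhds hy)) heq hy
  have heq₁ : Set.EqOn (pd₁ w) (fun y => G y (1, 0)) oS := fun y hy =>
    pd₁_eq_fderiv (hE.contDiffAt (strip_mem_nhds hy)) heq hy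
  have hline₁ : HasDerivAt (fun t : ℝ => ((t, x.2) : ℝ × ℝ)) ((1:ℝ), (0:ℝ)) x.1 :=
    HasDerivAt.prodMk (hasDerivAt_id x.1) (hasDerivAt_const x.1 x.2)
  have hline₂ : HasDerivAt (fun t : ℝ => ((x.1, t) : ℝ × ℝ)) ((0:ℝ), (1:ℝ)) x.2 :=
    HasDerivAt.prodMk (hasDerivAt_const x.2 x.1) (hasDerivAt_id x.2)
  have hGc₁ : HasDerivAt (fun t => G (t, x.2)) (fderiv ℝ G x (1, 0)) x.1 := by
    have := hGfd.comp_hasDerivAt x.1 hline₁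
    simpa [Function.comp_def] using this
  have hGc₂ : HasDerivAt (fun t => G (x.1, t)) (fderiv ℝ G x (0, 1)) x.2 := by
    have := hGfd.comp_hasDerivAt x.2 hline₂
    simpa [Function.comp_def] using this
  have h₁ : pd₁ (pd₂ w) x = (fderiv ℝ G x (1, 0)) (0, 1) := by
    rw [pd₁_congr heq₂ hx]
    unfold pd₁
    have : HasDerivAt (fun t => G (t, x.2) (0, 1)) ((fderiv ℝ G x (1, 0)) (0, 1)) x.1 := by
      have := hGc₁.clm_apply (hasDerivAt_const x.1 ((0:ℝ), (1:ℝ)))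
      simpa using this
    exact this.deriv
  have h₂ : pd₂ (pd₁ w) x = (fderiv ℝ G x (0, 1)) (1, 0) := by
    rw [pd₂_congr heq₁ hx]
    unfold pd₂
    have : HasDerivAt (fun t => G (x.1, t) (1, 0)) ((fderiv ℝ G x (0, 1)) (1, 0)) x.2 := by
      have := hGc₂.clm_apply (hasDerivAt_const x.2 ((1:ℝ), (0:ℝ)))
      simpa using this
    exact this.deriv
  rw [h₁, h₂, hsymm]

/-! ### Coefficient machinery -/

def oSlab : Set ((ℝ × ℝ) × ℝ × ℝ) := oS ×ˢ (Set.univ : Set (ℝ × ℝ))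

lemma isOpen_oSlab : IsOpen oSlab := (isOpen_oS).prod isOpen_univ

lemma oSlab_subset_slab4 : oSlab ⊆ slab4 :=
  Set.prod_mono oS_subset_strip le_rfl

lemma mem_oSlab {w : (ℝ × ℝ) × ℝ × ℝ} : w ∈ oSlab ↔ w.1 ∈ oS := by
  simp [oSlab, Set.mem_prod]

lemma slab4_mem_nhds {w : (ℝ × ℝ) × ℝ × ℝ} (hw : w ∈ oSlab) : slab4 ∈ nhds w :=
  Filter.mem_of_superset (isOpen_oSlab.mem_nhds hw) oSlab_subset_slab4

lemma uniqueDiffOn_slab4 : UniqueDiffOn ℝ slab4 :=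
  (uniqueDiffOn_strip).prod uniqueDiffOn_univ

lemma mem_slab4_of_fst {w : (ℝ × ℝ) × ℝ × ℝ} (hw : w.1 ∈ strip) : w ∈ slab4 := by
  refine ⟨?_, trivial⟩
  exact hw

def CNice (m : ℕ) (f : (ℝ × ℝ) × ℝ × ℝ → ℝ) : Prop :=
  ∃ E : (ℝ × ℝ) × ℝ × ℝ → ℝ, ContDiffOn ℝ (m : ℕ∞) E slab4 ∧ Set.EqOn f E oSlab

lemma CNice.of_le {m k : ℕ} {f : (ℝ × ℝ) × ℝ × ℝ → ℝ} (h : CNice m f) (hk : k ≤ m) :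
    CNice k f := by
  obtain ⟨E, hE, heq⟩ := h
  exact ⟨E, hE.of_le (by exact_mod_cast Nat.cast_le.mpr hk), heq⟩

/-- the z₁-line through a point of the slab -/
lemma zline₁_mem {w : (ℝ × ℝ) × ℝ × ℝ} (hw : w ∈ slab4) (t : ℝ) :
    ((w.1, (t, w.2.2)) : (ℝ × ℝ) × ℝ × ℝ) ∈ slab4 := ⟨hw.1, trivial⟩

lemma zline₂_mem {w : (ℝ × ℝ) × ℝ × ℝ} (hw : w ∈ slab4) (t : ℝ) :
    ((w.1, (w.2.1, t)) : (ℝ × ℝ) × ℝ × ℝ) ∈ slab4 := ⟨hw.1, trivial⟩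

/-- derivative of the z₁-line map -/
lemma hasDerivAt_zline₁ (w : (ℝ × ℝ) × ℝ × ℝ) (t : ℝ) :
    HasDerivAt (fun t : ℝ => ((w.1, (t, w.2.2)) : (ℝ × ℝ) × ℝ × ℝ))
      ((((0:ℝ),(0:ℝ)), ((1:ℝ),(0:ℝ)))) t :=
  HasDerivAt.prodMk (hasDerivAt_const t w.1) (HasDerivAt.prodMk (hasDerivAt_id t) (hasDerivAt_const t w.2.2))

lemma hasDerivAt_zline₂ (w : (ℝ × ℝ) × ℝ × ℝ) (t : ℝ) :
    HasDerivAt (fun t : ℝ => ((w.1, (w.2.1, t)) : (ℝ × ℝ) × ℝ × ℝ))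
      ((((0:ℝ),(0:ℝ)), ((0:ℝ),(1:ℝ)))) t :=
  HasDerivAt.prodMk (hasDerivAt_const t w.1) (HasDerivAt.prodMk (hasDerivAt_const t w.2.1) (hasDerivAt_id t))

lemma cnice_one_le {m : ℕ} (hm : 1 ≤ m) : ((m:ℕ∞) : WithTop ℕ∞) ≠ 0 := by
  exact_mod_cast Nat.one_le_iff_ne_zero.mp hm

lemma dz₁_eq_fderiv {f E : (ℝ × ℝ) × ℝ × ℝ → ℝ} {m : ℕ} (hm : 1 ≤ m)
    (hE : ContDiffOn ℝ (m : ℕ∞) E slab4) (heq : Set.EqOn f E oSlab)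
    {w : (ℝ × ℝ) × ℝ × ℝ} (hw : w ∈ oSlab) :
    dz₁ f w = fderiv ℝ E w (((0:ℝ),(0:ℝ)), ((1:ℝ),(0:ℝ))) ∧
      HasDerivAt (fun t => f (w.1, (t, w.2.2)))
        (fderiv ℝ E w (((0:ℝ),(0:ℝ)), ((1:ℝ),(0:ℝ)))) w.2.1 := by
  have hEx : ContDiffAt ℝ (m:ℕ∞) E w := hE.contDiffAt (slab4_mem_nhds hw)
  have hfd : HasFDerivAt E (fderiv ℝ E w) w :=
    (hEx.differentiableAt (cnice_one_le hm)).hasFDerivAt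
  have hlineq : (fun t => f (w.1, (t, w.2.2))) = (fun t => E (w.1, (t, w.2.2))) := by
    funext t
    exact heq (mem_oSlab.mpr (mem_oSlab.mp hw))
  have hE' : HasDerivAt (fun t => E (w.1, (t, w.2.2)))
      (fderiv ℝ E w (((0:ℝ),(0:ℝ)), ((1:ℝ),(0:ℝ)))) w.2.1 := by
    have := hfd.comp_hasDerivAt w.2.1 (hasDerivAt_zline₁ w w.2.1)
    simpa [Function.comp_def] using this
  have hf' : HasDerivAt (fun t => f (w.1, (t, w.2.2)))
      (fderiv ℝ E w (((0:ℝ),(0:ℝ)), ((1:ℝ),(0:ℝ)))) w.2.1 := by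
    rw [hlineq]; exact hE'
  exact ⟨hf'.deriv, hf'⟩

lemma dz₂_eq_fderiv {f E : (ℝ × ℝ) × ℝ × ℝ → ℝ} {m : ℕ} (hm : 1 ≤ m)
    (hE : ContDiffOn ℝ (m : ℕ∞) E slab4) (heq : Set.EqOn f E oSlab)
    {w : (ℝ × ℝ) × ℝ × ℝ} (hw : w ∈ oSlab) :
    dz₂ f w = fderiv ℝ E w (((0:ℝ),(0:ℝ)), ((0:ℝ),(1:ℝ))) ∧
      HasDerivAt (fun t => f (w.1, (w.2.1, t)))
        (fderiv ℝ E w (((0:ℝ),(0:ℝ)), ((0:ℝ),(1:ℝ)))) w.2.2 := by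
  have hEx : ContDiffAt ℝ (m:ℕ∞) E w := hE.contDiffAt (slab4_mem_nhds hw)
  have hfd : HasFDerivAt E (fderiv ℝ E w) w :=
    (hEx.differentiableAt (cnice_one_le hm)).hasFDerivAt
  have hlineq : (fun t => f (w.1, (w.2.1, t))) = (fun t => E (w.1, (w.2.1, t))) := by
    funext t
    exact heq (mem_oSlab.mpr (mem_oSlab.mp hw))
  have hE' : HasDerivAt (fun t => E (w.1, (w.2.1, t)))
      (fderiv ℝ E w (((0:ℝ),(0:ℝ)), ((0:ℝ),(1:ℝ)))) w.2.2 := by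
    have := hfd.comp_hasDerivAt w.2.2 (hasDerivAt_zline₂ w w.2.2)
    simpa [Function.comp_def] using this
  have hf' : HasDerivAt (fun t => f (w.1, (w.2.1, t)))
      (fderiv ℝ E w (((0:ℝ),(0:ℝ)), ((0:ℝ),(1:ℝ)))) w.2.2 := by
    rw [hlineq]; exact hE'
  exact ⟨hf'.deriv, hf'⟩

lemma cnice_m_le {m : ℕ} : ((m:ℕ∞) : WithTop ℕ∞) + 1 ≤ (((m+1:ℕ):ℕ∞) : WithTop ℕ∞) := by
  exact_mod_cast le_refl _

lemma CNice.cdz₁ {m : ℕ} {f : (ℝ × ℝ) × ℝ × ℝ → ℝ} (h : CNice (m+1) f) :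
    CNice m (dz₁ f) := by
  obtain ⟨E, hE, heq⟩ := h
  refine ⟨fun w => fderivWithin ℝ E slab4 w (((0:ℝ),(0:ℝ)), ((1:ℝ),(0:ℝ))), ?_, ?_⟩
  · exact (hE.fderivWithin uniqueDiffOn_slab4 cnice_m_le).clm_apply contDiffOn_const
  · intro w hw
    show dz₁ f w = fderivWithin ℝ E slab4 w (((0:ℝ),(0:ℝ)), ((1:ℝ),(0:ℝ)))
    rw [(dz₁_eq_fderiv (Nat.le_add_left 1 m) hE heq hw).1,
      fderivWithin_of_mem_nhds (slab4_mem_nhds hw)]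

lemma CNice.cdz₂ {m : ℕ} {f : (ℝ × ℝ) × ℝ × ℝ → ℝ} (h : CNice (m+1) f) :
    CNice m (dz₂ f) := by
  obtain ⟨E, hE, heq⟩ := h
  refine ⟨fun w => fderivWithin ℝ E slab4 w (((0:ℝ),(0:ℝ)), ((0:ℝ),(1:ℝ))), ?_, ?_⟩
  · exact (hE.fderivWithin uniqueDiffOn_slab4 cnice_m_le).clm_apply contDiffOn_const
  · intro w hw
    show dz₂ f w = fderivWithin ℝ E slab4 w (((0:ℝ),(0:ℝ)), ((0:ℝ),(1:ℝ)))
    rw [(dz₂_eq_fderiv (Nat.le_add_left 1 m) hE heq hw).1,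
      fderivWithin_of_mem_nhds (slab4_mem_nhds hw)]

/-- transfer of the symmetry hypothesis to one more z-derivative -/
lemma sym_dz₁ {a : (ℝ × ℝ) × ℝ × ℝ → ℝ × ℝ} (hsym : SymA a)
    {w : (ℝ × ℝ) × ℝ × ℝ} (hw : w ∈ slab4) :
    dz₁ (dz₁ (A₂ a)) w = dz₁ (dz₂ (A₁ a)) w := by
  unfold dz₁
  congr 1
  funext t
  exact (hsym _ (zline₁_mem hw t)).symm

lemma sym_dz₂ {a : (ℝ × ℝ) × ℝ × ℝ → ℝ × ℝ} (hsym : SymA a)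
    {w : (ℝ × ℝ) × ℝ × ℝ} (hw : w ∈ slab4) :
    dz₂ (dz₁ (A₂ a)) w = dz₂ (dz₂ (A₁ a)) w := by
  unfold dz₂
  congr 1
  funext t
  exact (hsym _ (zline₂_mem hw t)).symm

/-! ### Composition of a coefficient with the gradient -/

lemma norm_dir_le (a b : ℝ) :
    ‖((((0:ℝ),(1:ℝ)) : ℝ × ℝ), ((a, b) : ℝ × ℝ))‖ ≤ 1 + |a| + |b| := by
  rw [Prod.norm_def, Prod.norm_def, Prod.norm_def]
  simp only [Real.norm_eq_abs]
  have h0 : |(0:ℝ)| = 0 := abs_zero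
  have h1 : |(1:ℝ)| = 1 := abs_one
  rw [h0, h1]
  have ha : 0 ≤ |a| := abs_nonneg a
  have hb : 0 ≤ |b| := abs_nonneg b
  refine max_le (by simp; linarith) (max_le (by linarith) (by linarith))

lemma comp_coeff {f : (ℝ × ℝ) × ℝ × ℝ → ℝ} (hf : CNice 2 f) (R : ℝ) :
    ∃ M : ℝ, 0 ≤ M ∧ ∀ (F : ℝ × ℝ → ℝ),
      Nice (pd₁ F) → Nice (pd₂ F) →
      (∀ x ∈ unitSq, ‖gradc F x‖ ≤ R) →
      ∃ C' : ℝ × ℝ → ℝ,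
      (∀ x ∈ oS, HasDerivAt (fun t => f ((x.1, t), gradc F (x.1, t))) (C' x) x.2) ∧
      ContinuousOn (fun x => f (x, gradc F x)) oS ∧
      (∀ x ∈ unitSq, |f (x, gradc F x)| ≤ M) ∧
      ContinuousOn C' oS ∧
      (∀ x ∈ unitSq, |C' x| ≤ M * (1 + |pd₂ (pd₁ F) x| + |pd₂ (pd₂ F) x|)) := by
  obtain ⟨Ef, hEf, heqf⟩ := hf
  set G := fderivWithin ℝ Ef slab4 with hGdef
  have hone2 : (1 : WithTop ℕ∞) ≤ ((2:ℕ∞) : WithTop ℕ∞) := by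
    exact_mod_cast (by norm_num : (1:ℕ∞) ≤ 2)
  have hG : ContinuousOn G slab4 :=
    hEf.continuousOn_fderivWithin uniqueDiffOn_slab4 hone2
  have hGeq : ∀ w ∈ oSlab, G w = fderiv ℝ Ef w := fun w hw =>
    fderivWithin_of_mem_nhds (slab4_mem_nhds hw)
  -- the compact set
  set K : Set ((ℝ × ℝ) × ℝ × ℝ) :=
    (Set.Icc (0:ℝ) 1 ×ˢ Set.Icc (0:ℝ) 1) ×ˢ Metric.closedBall 0 R with hKdef
  have hKc : IsCompact K :=
    ((isCompact_Icc.prod isCompact_Icc)).prod (isCompact_closedBall _ _)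
  have hKsub : K ⊆ slab4 := by
    rintro ⟨⟨w1, w2⟩, z⟩ ⟨⟨hw1, _⟩, _⟩
    exact ⟨⟨hw1, trivial⟩, trivial⟩
  obtain ⟨M₀, hM₀⟩ := hKc.exists_bound_of_continuousOn (hEf.continuousOn.mono hKsub)
  obtain ⟨M₁, hM₁⟩ := hKc.exists_bound_of_continuousOn (hG.mono hKsub)
  set M : ℝ := max 1 (max M₀ M₁) with hMdef
  have hM1 : (1:ℝ) ≤ M := le_max_left _ _
  have hMnn : 0 ≤ M := le_trans zero_le_one hM1
  refine ⟨M, hMnn, ?_⟩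
  intro F h1 h2 hR
  have hKmem : ∀ x ∈ unitSq, (x, gradc F x) ∈ K := by
    intro x hx
    refine ⟨⟨Set.Ioo_subset_Icc_self hx.1, Set.Ioo_subset_Icc_self hx.2⟩, ?_⟩
    simpa [Metric.mem_closedBall, dist_eq_norm] using hR x hx
  have hoSlab : ∀ x ∈ oS, ((x, gradc F x) : (ℝ × ℝ) × ℝ × ℝ) ∈ oSlab := by
    intro x hx; exact mem_oSlab.mpr hx
  have hgradc : ∀ y : ℝ × ℝ, gradc F y = (pd₁ F y, pd₂ F y) := fun y => rfl
  -- the derivative function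
  refine ⟨fun x => G (x, gradc F x)
    ((((0:ℝ),(1:ℝ)) : ℝ × ℝ), ((pd₂ (pd₁ F) x, pd₂ (pd₂ F) x) : ℝ × ℝ)), ?_, ?_, ?_, ?_, ?_⟩
  · -- HasDerivAt
    intro x hx
    have hγ : HasDerivAt (fun t => (((x.1, t), gradc F (x.1, t)) : (ℝ × ℝ) × ℝ × ℝ))
        (((((0:ℝ),(1:ℝ)) : ℝ × ℝ), ((pd₂ (pd₁ F) x, pd₂ (pd₂ F) x) : ℝ × ℝ))) x.2 := by
      refine HasDerivAt.prodMk ?_ ?_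
      · exact HasDerivAt.prodMk (hasDerivAt_const x.2 x.1) (hasDerivAt_id x.2)
      · simp only [hgradc]
        exact HasDerivAt.prodMk (h1.hasDerivAt₂ hx) (h2.hasDerivAt₂ hx)
    have hw : ((x, gradc F x) : (ℝ × ℝ) × ℝ × ℝ) ∈ oSlab := hoSlab x hx
    have hEfd : HasFDerivAt Ef (fderiv ℝ Ef (x, gradc F x)) (x, gradc F x) :=
      ((hEf.contDiffAt (slab4_mem_nhds hw)).differentiableAt (by simp)).hasFDerivAt
    have hcomp := hEfd.comp_hasDerivAt x.2 (by simpa using hγ)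
    have hfun : (fun t => f ((x.1, t), gradc F (x.1, t))) =
        (fun t => Ef ((x.1, t), gradc F (x.1, t))) := by
      funext t
      exact heqf (mem_oSlab.mpr (mem_oS.mpr (mem_oS.mp hx)))
    rw [hfun]
    show HasDerivAt _ (G (x, gradc F x)
      ((((0:ℝ),(1:ℝ)) : ℝ × ℝ), ((pd₂ (pd₁ F) x, pd₂ (pd₂ F) x) : ℝ × ℝ))) x.2
    rw [hGeq _ hw]
    simpa [Function.comp_def] using hcomp
  · -- continuity of composition
    have hmap : ContinuousOn (fun x : ℝ × ℝ => ((x, gradc F x) : (ℝ × ℝ) × ℝ × ℝ)) oS := by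
      refine (continuousOn_id).prodMk ?_
      exact (h1.continuousOn).prodMk (h2.continuousOn)
    have : ContinuousOn (fun x : ℝ × ℝ => Ef (x, gradc F x)) oS :=
      hEf.continuousOn.comp hmap (fun x hx => oSlab_subset_slab4 (hoSlab x hx))
    exact this.congr (fun x hx => heqf (hoSlab x hx))
  · -- bound on composition
    intro x hx
    have : f (x, gradc F x) = Ef (x, gradc F x) := heqf (hoSlab x (unitSq_subset_oS hx))
    rw [this]
    calc |Ef (x, gradc F x)| ≤ M₀ := hM₀ _ (hKmem x hx)
      _ ≤ M := le_trans (le_max_left _ _) (le_max_right _ _)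
  · -- continuity of C'
    have hmap : ContinuousOn (fun x : ℝ × ℝ => ((x, gradc F x) : (ℝ × ℝ) × ℝ × ℝ)) oS := by
      refine (continuousOn_id).prodMk ?_
      exact (h1.continuousOn).prodMk (h2.continuousOn)
    refine ContinuousOn.clm_apply
      (hG.comp hmap (fun x hx => oSlab_subset_slab4 (hoSlab x hx))) ?_
    exact (continuousOn_const).prodMk ((h1.npd₂.continuousOn).prodMk (h2.npd₂.continuousOn))
  · -- bound on C'
    intro x hx
    have hb : ‖G (x, gradc F x)‖ ≤ M₁ := hM₁ _ (hKmem x hx)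
    calc |G (x, gradc F x)
          ((((0:ℝ),(1:ℝ)) : ℝ × ℝ), ((pd₂ (pd₁ F) x, pd₂ (pd₂ F) x) : ℝ × ℝ))|
        ≤ ‖G (x, gradc F x)‖ *
          ‖((((0:ℝ),(1:ℝ)) : ℝ × ℝ), ((pd₂ (pd₁ F) x, pd₂ (pd₂ F) x) : ℝ × ℝ))‖ :=
          (G (x, gradc F x)).le_opNorm _
      _ ≤ M * (1 + |pd₂ (pd₁ F) x| + |pd₂ (pd₂ F) x|) := by
          apply mul_le_mul
          · exact le_trans hb (le_trans (le_max_right _ _) (le_max_right _ _))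
          · exact norm_dir_le _ _
          · exact norm_nonneg _
          · exact hMnn

/-! ### Integration infrastructure -/

lemma integrableOn_Ioo01 {g : ℝ → ℝ} (hc : ContinuousOn g (Set.Ioo 0 1))
    {B : ℝ} (hB : ∀ t ∈ Set.Ioo (0:ℝ) 1, |g t| ≤ B) :
    IntegrableOn g (Set.Ioo (0:ℝ) 1) := by
  have hm : AEStronglyMeasurable g (volume.restrict (Set.Ioo (0:ℝ) 1)) :=
    hc.aestronglyMeasurable measurableSet_Ioo
  haveI : IsFiniteMeasure (volume.restrict (Set.Ioo (0:ℝ) 1)) :=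
    ⟨by rw [Measure.restrict_apply_univ, Real.volume_Ioo]; norm_num⟩
  refine Integrable.mono' (integrable_const B) hm ?_
  rw [MeasureTheory.ae_restrict_iff' measurableSet_Ioo]
  filter_upwards with t ht
  exact hB t ht

/-- Periodic integration by parts: the integral of a `pd₂`-derivative vanishes. -/
lemma integral_pd₂_eq_zero {H H' : ℝ × ℝ → ℝ}
    (hd : ∀ x ∈ oS, HasDerivAt (fun t => H (x.1, t)) (H' x) x.2)
    (hc : ContinuousOn H' oS)
    (hint : IntegrableOn H' unitSq)
    (hper : ∀ x₁ x₂ : ℝ, H (x₁, x₂ + 1) = H (x₁, x₂)) :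
    ∫ x in unitSq, H' x = 0 := by
  have hint' : IntegrableOn H' (Set.Ioo (0:ℝ) 1 ×ˢ Set.Ioo (0:ℝ) 1)
      ((volume : Measure ℝ).prod (volume : Measure ℝ)) := by
    rw [← MeasureTheory.Measure.volume_eq_prod]; exact hint
  have h1 : ∫ x in unitSq, H' x =
      ∫ x₁ in Set.Ioo (0:ℝ) 1, ∫ x₂ in Set.Ioo (0:ℝ) 1, H' (x₁, x₂) := by
    rw [show unitSq = Set.Ioo (0:ℝ) 1 ×ˢ Set.Ioo (0:ℝ) 1 from rfl,
      MeasureTheory.Measure.volume_eq_prod]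
    exact setIntegral_prod _ hint'
  rw [h1]
  have h2 : Set.EqOn (fun x₁ => ∫ x₂ in Set.Ioo (0:ℝ) 1, H' (x₁, x₂))
      (fun _ => (0:ℝ)) (Set.Ioo (0:ℝ) 1) := by
    intro x₁ hx₁
    have hmem : ∀ t : ℝ, ((x₁, t) : ℝ × ℝ) ∈ oS := fun t => mem_oS.mpr hx₁
    have hline : ContinuousOn (fun t : ℝ => ((x₁, t) : ℝ × ℝ)) (Set.uIcc (0:ℝ) 1) :=
      (continuous_const.prodMk continuous_id).continuousOn
    have hcont : ContinuousOn (fun t => H' (x₁, t)) (Set.uIcc (0:ℝ) 1) :=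
      hc.comp hline (fun t _ => hmem t)
    have hii : IntervalIntegrable (fun t => H' (x₁, t)) volume 0 1 :=
      hcont.intervalIntegrable
    have hftc : ∫ t in (0:ℝ)..1, H' (x₁, t) = H (x₁, 1) - H (x₁, 0) := by
      refine intervalIntegral.integral_eq_sub_of_hasDerivAt (f := fun t => H (x₁, t)) (fun t ht => ?_) hii
      have := hd (x₁, t) (hmem t)
      simpa using this
    have hconv : ∫ x₂ in Set.Ioo (0:ℝ) 1, H' (x₁, x₂) = ∫ t in (0:ℝ)..1, H' (x₁, t) := by
      rw [intervalIntegral.integral_of_le (by norm_num : (0:ℝ) ≤ 1),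
        MeasureTheory.integral_Ioc_eq_integral_Ioo]
    show (∫ x₂ in Set.Ioo (0:ℝ) 1, H' (x₁, x₂)) = 0
    rw [hconv, hftc]
    have : H (x₁, 1) = H (x₁, 0) := by simpa using hper x₁ 0
    rw [this]; ring
  rw [setIntegral_congr_fun measurableSet_Ioo h2]
  simp

/-- Swapped iterated integral of |g| equals the integral over the square. -/
lemma swap_abs_integral {g : ℝ × ℝ → ℝ} (hig : IntegrableOn g unitSq) :
    ∫ t in Set.Ioo (0:ℝ) 1, ∫ y in Set.Ioo (0:ℝ) 1, |g (y, t)| = ∫ y in unitSq, |g y| := by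
  have habs : IntegrableOn (fun y => |g y|) unitSq := hig.abs
  have hres : ((volume : Measure ℝ).restrict (Set.Ioo (0:ℝ) 1)).prod
      ((volume : Measure ℝ).restrict (Set.Ioo (0:ℝ) 1)) =
      (volume : Measure (ℝ × ℝ)).restrict unitSq := by
    rw [MeasureTheory.Measure.volume_eq_prod, MeasureTheory.Measure.prod_restrict]
    rfl
  have hP : Integrable (fun y : ℝ × ℝ => |g y|)
      (((volume : Measure ℝ).restrict (Set.Ioo (0:ℝ) 1)).prod
        ((volume : Measure ℝ).restrict (Set.Ioo (0:ℝ) 1))) := by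
    rw [hres]; exact habs
  have hswap : Integrable (fun q : ℝ × ℝ => |g (q.2, q.1)|)
      (((volume : Measure ℝ).restrict (Set.Ioo (0:ℝ) 1)).prod
        ((volume : Measure ℝ).restrict (Set.Ioo (0:ℝ) 1))) := hP.swap
  calc ∫ t in Set.Ioo (0:ℝ) 1, ∫ y in Set.Ioo (0:ℝ) 1, |g (y, t)|
      = ∫ q : ℝ × ℝ, |g (q.2, q.1)|
        ∂(((volume : Measure ℝ).restrict (Set.Ioo (0:ℝ) 1)).prod
          ((volume : Measure ℝ).restrict (Set.Ioo (0:ℝ) 1))) := by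
        rw [MeasureTheory.integral_prod _ hswap]
    _ = ∫ q : ℝ × ℝ, |g q|
        ∂(((volume : Measure ℝ).restrict (Set.Ioo (0:ℝ) 1)).prod
          ((volume : Measure ℝ).restrict (Set.Ioo (0:ℝ) 1))) := by
        rw [← MeasureTheory.integral_prod_swap]
        simp [Prod.swap]
    _ = ∫ y in unitSq, |g y| := by rw [hres]

lemma integrable_partial_abs {g : ℝ × ℝ → ℝ} (hig : IntegrableOn g unitSq) :
    IntegrableOn (fun t => ∫ y in Set.Ioo (0:ℝ) 1, |g (y, t)|) (Set.Ioo (0:ℝ) 1) := by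
  have hres : ((volume : Measure ℝ).restrict (Set.Ioo (0:ℝ) 1)).prod
      ((volume : Measure ℝ).restrict (Set.Ioo (0:ℝ) 1)) =
      (volume : Measure (ℝ × ℝ)).restrict unitSq := by
    rw [MeasureTheory.Measure.volume_eq_prod, MeasureTheory.Measure.prod_restrict]
    rfl
  have hP : Integrable (fun y : ℝ × ℝ => |g y|)
      (((volume : Measure ℝ).restrict (Set.Ioo (0:ℝ) 1)).prod
        ((volume : Measure ℝ).restrict (Set.Ioo (0:ℝ) 1))) := by
    rw [hres]; exact hig.abs
  exact hP.swap.integral_prod_left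

/-! ### One-dimensional sup bound -/

lemma oneD_bound {g g' : ℝ → ℝ}
    (hd : ∀ t ∈ Set.Ioo (0:ℝ) 1, HasDerivAt g (g' t) t)
    (hcg : ContinuousOn g (Set.Ioo 0 1))
    (hig : IntegrableOn g (Set.Ioo (0:ℝ) 1))
    (hig' : IntegrableOn g' (Set.Ioo (0:ℝ) 1))
    (hcg' : ContinuousOn g' (Set.Ioo 0 1))
    {v : ℝ} (hv : v ∈ Set.Ioo (0:ℝ) 1) :
    |g v| ≤ 2 * (∫ t in Set.Ioo (0:ℝ) 1, |g t|) + ∫ t in Set.Ioo (0:ℝ) 1, |g' t| := by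
  have hIccsub : Set.Icc (1/4 : ℝ) (3/4) ⊆ Set.Ioo (0:ℝ) 1 := by
    intro t ht; constructor <;> [linarith [ht.1]; linarith [ht.2]]
  -- minimum of |g| on [1/4, 3/4]
  obtain ⟨u, huI, humin⟩ := (isCompact_Icc (a := (1/4:ℝ)) (b := (3/4:ℝ))).exists_isMinOn
    (Set.nonempty_Icc.mpr (by norm_num))
    ((hcg.mono hIccsub).abs)
  have hu : u ∈ Set.Ioo (0:ℝ) 1 := hIccsub huI
  -- |g u| ≤ 2 ∫ |g|
  have hgu : |g u| ≤ 2 * ∫ t in Set.Ioo (0:ℝ) 1, |g t| := by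
    have h1 : ∫ t in Set.Icc (1/4:ℝ) (3/4), |g u| ≤ ∫ t in Set.Icc (1/4:ℝ) (3/4), |g t| := by
      refine setIntegral_mono_on (integrable_const _)
        (IntegrableOn.mono_set (hig.abs) hIccsub) measurableSet_Icc ?_
      intro t ht
      exact humin ht
    have h2 : ∫ t in Set.Icc (1/4:ℝ) (3/4), |g t| ≤ ∫ t in Set.Ioo (0:ℝ) 1, |g t| := by
      refine setIntegral_mono_set (hig.abs) ?_ (hIccsub.eventuallyLE)
      filter_upwards with t using abs_nonneg _
    have h3 : ∫ t in Set.Icc (1/4:ℝ) (3/4), |g u| = |g u| / 2 := by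
      rw [setIntegral_const, measureReal_def, Real.volume_Icc]
      norm_num
      ring
    linarith [h1, h2, h3.symm.le]
  -- FTC between u and v
  have hftc : |g v - g u| ≤ ∫ t in Set.Ioo (0:ℝ) 1, |g' t| := by
    have habs : ∀ p q : ℝ, p ≤ q → p ∈ Set.Ioo (0:ℝ) 1 → q ∈ Set.Ioo (0:ℝ) 1 →
        |g q - g p| ≤ ∫ t in Set.Ioo (0:ℝ) 1, |g' t| := by
      intro p q hpq hp hq
      have hsub : Set.uIcc p q ⊆ Set.Ioo (0:ℝ) 1 := by
        rw [Set.uIcc_of_le hpq]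
        intro t ht; exact ⟨lt_of_lt_of_le hp.1 ht.1, lt_of_le_of_lt ht.2 hq.2⟩
      have hii : IntervalIntegrable g' volume p q := by
        apply ContinuousOn.intervalIntegrable
        exact hcg'.mono hsub
      have heq : ∫ t in p..q, g' t = g q - g p :=
        intervalIntegral.integral_eq_sub_of_hasDerivAt
          (fun t ht => hd t (hsub ht)) hii
      rw [← heq]
      calc |∫ t in p..q, g' t| ≤ ∫ t in p..q, |g' t| := by
            rw [← Real.norm_eq_abs]
            exact (intervalIntegral.norm_integral_le_integral_norm hpq).trans
              (le_of_eq (by simp [Real.norm_eq_abs]))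
        _ = ∫ t in Set.Ioc p q, |g' t| :=
            intervalIntegral.integral_of_le hpq
        _ ≤ ∫ t in Set.Ioo (0:ℝ) 1, |g' t| := by
            refine setIntegral_mono_set (hig'.abs) ?_ ?_
            · filter_upwards with t using abs_nonneg _
            · have hsub2 : Set.Ioc p q ⊆ Set.Ioo (0:ℝ) 1 := fun t ht =>
                ⟨hp.1.trans ht.1, ht.2.trans_lt hq.2⟩
              exact hsub2.eventuallyLE
    rcases le_total u v with h | h
    · exact habs u v h hu hv
    · have := habs v u h hv hu
      rwa [abs_sub_comm]
  calc |g v| = |g u + (g v - g u)| := by ring_nf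
    _ ≤ |g u| + |g v - g u| := abs_add_le _ _
    _ ≤ 2 * (∫ t in Set.Ioo (0:ℝ) 1, |g t|) + ∫ t in Set.Ioo (0:ℝ) 1, |g' t| := by
        exact add_le_add hgu hftc

/-! ### L¹ ≤ L², Hsq facts -/

lemma L2sq_nonneg (g : ℝ × ℝ → ℝ) : 0 ≤ L2sq g :=
  integral_nonneg (fun x => sq_nonneg (g x))

lemma Hsq_nonneg (m : ℕ) (w : ℝ × ℝ → ℝ) : 0 ≤ Hsq m w :=
  Finset.sum_nonneg fun _ _ => Finset.sum_nonneg fun _ _ => L2sq_nonneg _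

lemma L2sq_le_Hsq {m b c : ℕ} (hbc : b + c ≤ m) (w : ℝ × ℝ → ℝ) :
    L2sq (pd₁^[b] (pd₂^[c] w)) ≤ Hsq m w := by
  have hb : b ∈ Finset.range (m + 1) := Finset.mem_range.mpr (by omega)
  have hc : c ∈ Finset.range (m + 1 - b) := Finset.mem_range.mpr (by omega)
  calc L2sq (pd₁^[b] (pd₂^[c] w))
      ≤ ∑ c' ∈ Finset.range (m + 1 - b), L2sq (pd₁^[b] (pd₂^[c'] w)) :=
        Finset.single_le_sum (f := fun c' => L2sq (pd₁^[b] (pd₂^[c'] w)))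
          (fun _ _ => L2sq_nonneg _) hc
    _ ≤ Hsq m w :=
        Finset.single_le_sum
          (f := fun b' => ∑ c' ∈ Finset.range (m + 1 - b'), L2sq (pd₁^[b'] (pd₂^[c'] w)))
          (fun _ _ => Finset.sum_nonneg fun _ _ => L2sq_nonneg _) hb

lemma L2sq_congr {g₁ g₂ : ℝ × ℝ → ℝ} (h : Set.EqOn g₁ g₂ unitSq) : L2sq g₁ = L2sq g₂ :=
  setIntegral_congr_fun measurableSet_unitSq (fun x hx => by rw [h hx])

lemma abs_integral_le_l2 {g : ℝ × ℝ → ℝ} (hig : IntegrableOn g unitSq)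
    (hig2 : IntegrableOn (fun y => g y ^ 2) unitSq) :
    ∫ y in unitSq, |g y| ≤ l2 g := by
  set m := ∫ y in unitSq, |g y| with hm
  have hm0 : 0 ≤ m := integral_nonneg (fun y => abs_nonneg _)
  haveI : IsFiniteMeasure (volume.restrict unitSq) :=
    ⟨by rw [Measure.restrict_apply_univ, volume_unitSq]; exact ENNReal.one_lt_top⟩
  have key : m ^ 2 ≤ L2sq g := by
    have hexp : ∀ y : ℝ × ℝ, (|g y| - m) ^ 2 = g y ^ 2 - 2 * m * |g y| + m ^ 2 := by
      intro y
      have : |g y| ^ 2 = g y ^ 2 := sq_abs _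
      nlinarith [this]
    have hnn : 0 ≤ ∫ y in unitSq, (|g y| - m) ^ 2 :=
      integral_nonneg (fun y => sq_nonneg _)
    have hint : ∫ y in unitSq, (|g y| - m) ^ 2 = L2sq g - 2 * m * m + m ^ 2 := by
      have h1 : IntegrableOn (fun y => g y ^ 2 - 2 * m * |g y|) unitSq :=
        hig2.sub ((hig.abs).const_mul (2 * m))
      calc ∫ y in unitSq, (|g y| - m) ^ 2
          = ∫ y in unitSq, (g y ^ 2 - 2 * m * |g y| + m ^ 2) :=
            setIntegral_congr_fun measurableSet_unitSq (fun y _ => hexp y)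
        _ = (∫ y in unitSq, (g y ^ 2 - 2 * m * |g y|)) + ∫ _y in unitSq, m ^ 2 :=
            integral_add h1 (integrable_const _)
        _ = (∫ y in unitSq, g y ^ 2) - (∫ y in unitSq, 2 * m * |g y|) + m ^ 2 := by
            rw [integral_sub hig2 ((hig.abs).const_mul (2 * m))]
            congr 1
            rw [setIntegral_const, measureReal_def, volume_unitSq]
            simp
        _ = L2sq g - 2 * m * m + m ^ 2 := by
            rw [MeasureTheory.integral_const_mul]
            rfl
    nlinarith [hnn, hint]
  have : m = Real.sqrt (m ^ 2) := (Real.sqrt_sq hm0).symm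
  rw [this]
  exact Real.sqrt_le_sqrt key

/-! ### line helpers and the sup bound -/

lemma line_vert {g : ℝ × ℝ → ℝ} (h : Nice g) {x₁ : ℝ} (hx₁ : x₁ ∈ Set.Ioo (0:ℝ) 1) :
    ContinuousOn (fun t => g (x₁, t)) (Set.Ioo (0:ℝ) 1) ∧
      IntegrableOn (fun t => g (x₁, t)) (Set.Ioo (0:ℝ) 1) := by
  have hc : ContinuousOn (fun t : ℝ => g (x₁, t)) (Set.Ioo (0:ℝ) 1) := by
    refine h.continuousOn.comp ((continuous_const.prodMk continuous_id).continuousOn) ?_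
    intro t _
    exact mem_oS.mpr hx₁
  obtain ⟨B, hB⟩ := h.bounded
  refine ⟨hc, integrableOn_Ioo01 hc (B := B) ?_⟩
  intro t ht
  exact hB (x₁, t) ⟨hx₁, ht⟩

lemma line_horiz {g : ℝ × ℝ → ℝ} (h : Nice g) {y₂ : ℝ} (hy₂ : y₂ ∈ Set.Ioo (0:ℝ) 1) :
    ContinuousOn (fun t => g (t, y₂)) (Set.Ioo (0:ℝ) 1) ∧
      IntegrableOn (fun t => g (t, y₂)) (Set.Ioo (0:ℝ) 1) := by
  have hc : ContinuousOn (fun t : ℝ => g (t, y₂)) (Set.Ioo (0:ℝ) 1) := by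
    refine h.continuousOn.comp ((continuous_id.prodMk continuous_const).continuousOn) ?_
    intro t ht
    exact mem_oS.mpr ht
  obtain ⟨B, hB⟩ := h.bounded
  refine ⟨hc, integrableOn_Ioo01 hc (B := B) ?_⟩
  intro t ht
  exact hB (t, y₂) ⟨ht, hy₂⟩

/-- key horizontal estimate integrated in the second variable -/
lemma horiz_step {g : ℝ × ℝ → ℝ} (hg : Nice g) {x₁ : ℝ} (hx₁ : x₁ ∈ Set.Ioo (0:ℝ) 1) :
    ∫ t in Set.Ioo (0:ℝ) 1, |g (x₁, t)| ≤
      2 * (∫ y in unitSq, |g y|) + ∫ y in unitSq, |pd₁ g y| := by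
  have hig : IntegrableOn g unitSq := by
    obtain ⟨B, hB⟩ := hg.bounded
    exact integrableOn_unitSq (hg.continuousOn.mono unitSq_subset_oS) hB
  have hig1 : IntegrableOn (pd₁ g) unitSq := by
    obtain ⟨B, hB⟩ := hg.npd₁.bounded
    exact integrableOn_unitSq (hg.npd₁.continuousOn.mono unitSq_subset_oS) hB
  have hpoint : ∀ t ∈ Set.Ioo (0:ℝ) 1, |g (x₁, t)| ≤
      2 * (∫ y in Set.Ioo (0:ℝ) 1, |g (y, t)|) + ∫ y in Set.Ioo (0:ℝ) 1, |pd₁ g (y, t)| := by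
    intro t ht
    refine oneD_bound (g := fun y => g (y, t)) (g' := fun y => pd₁ g (y, t))
      (fun y hy => ?_) (line_horiz hg ht).1 (line_horiz hg ht).2
      (line_horiz hg.npd₁ ht).2 (line_horiz hg.npd₁ ht).1 hx₁
    have := hg.hasDerivAt₁ (x := (y, t)) (mem_oS.mpr hy)
    simpa using this
  have hmono : ∫ t in Set.Ioo (0:ℝ) 1, |g (x₁, t)| ≤
      ∫ t in Set.Ioo (0:ℝ) 1,
        (2 * (∫ y in Set.Ioo (0:ℝ) 1, |g (y, t)|) + ∫ y in Set.Ioo (0:ℝ) 1, |pd₁ g (y, t)|) := by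
    refine setIntegral_mono_on ((line_vert hg hx₁).2.abs) ?_ measurableSet_Ioo hpoint
    exact ((integrable_partial_abs hig).const_mul 2).add (integrable_partial_abs hig1)
  have hsplit : ∫ t in Set.Ioo (0:ℝ) 1,
      (2 * (∫ y in Set.Ioo (0:ℝ) 1, |g (y, t)|) + ∫ y in Set.Ioo (0:ℝ) 1, |pd₁ g (y, t)|) =
      2 * (∫ y in unitSq, |g y|) + ∫ y in unitSq, |pd₁ g y| := by
    rw [integral_add ((integrable_partial_abs hig).const_mul 2) (integrable_partial_abs hig1),
      MeasureTheory.integral_const_mul, swap_abs_integral hig, swap_abs_integral hig1]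
  linarith [hmono, hsplit.le]

/-- The sup bound (Sobolev-type embedding on the square). -/
lemma sup_bound {w : ℝ × ℝ → ℝ} (hw : Nice w) {x : ℝ × ℝ} (hx : x ∈ unitSq) :
    |w x| ≤ 4 * ((∫ y in unitSq, |w y|) + (∫ y in unitSq, |pd₁ w y|) +
      (∫ y in unitSq, |pd₂ w y|) + (∫ y in unitSq, |pd₁ (pd₂ w) y|)) := by
  have hx₁ : x.1 ∈ Set.Ioo (0:ℝ) 1 := hx.1
  have hx₂ : x.2 ∈ Set.Ioo (0:ℝ) 1 := hx.2
  have hstep1 : |w x| ≤ 2 * (∫ t in Set.Ioo (0:ℝ) 1, |w (x.1, t)|) +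
      ∫ t in Set.Ioo (0:ℝ) 1, |pd₂ w (x.1, t)| := by
    have := oneD_bound (g := fun t => w (x.1, t)) (g' := fun t => pd₂ w (x.1, t))
      (fun t _ => by simpa using hw.hasDerivAt₂ (x := (x.1, t)) (mem_oS.mpr hx₁))
      (line_vert hw hx₁).1 (line_vert hw hx₁).2
      (line_vert hw.npd₂ hx₁).2 (line_vert hw.npd₂ hx₁).1 hx₂
    simpa using this
  have h2 := horiz_step hw hx₁
  have h3 := horiz_step hw.npd₂ hx₁
  have hnn : ∀ g : ℝ × ℝ → ℝ, 0 ≤ ∫ y in unitSq, |g y| := fun g =>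
    integral_nonneg (fun y => abs_nonneg _)
  have := hnn w; have := hnn (pd₁ w); have := hnn (pd₂ w); have := hnn (pd₁ (pd₂ w))
  linarith [hstep1, h2, h3]

/-! ### Bookkeeping: continuous-and-bounded functions -/

def CB (g : ℝ × ℝ → ℝ) (B : ℝ) : Prop :=
  ContinuousOn g oS ∧ 0 ≤ B ∧ ∀ x ∈ unitSq, |g x| ≤ B

lemma CB.mul {g₁ g₂ : ℝ × ℝ → ℝ} {B₁ B₂ : ℝ} (h₁ : CB g₁ B₁) (h₂ : CB g₂ B₂) :
    CB (fun x => g₁ x * g₂ x) (B₁ * B₂) := by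
  refine ⟨h₁.1.mul h₂.1, mul_nonneg h₁.2.1 h₂.2.1, fun x hx => ?_⟩
  rw [abs_mul]
  exact mul_le_mul (h₁.2.2 x hx) (h₂.2.2 x hx) (abs_nonneg _) h₁.2.1

lemma CB.add {g₁ g₂ : ℝ × ℝ → ℝ} {B₁ B₂ : ℝ} (h₁ : CB g₁ B₁) (h₂ : CB g₂ B₂) :
    CB (fun x => g₁ x + g₂ x) (B₁ + B₂) := by
  refine ⟨h₁.1.add h₂.1, add_nonneg h₁.2.1 h₂.2.1, fun x hx => ?_⟩
  exact (abs_add_le _ _).trans (add_le_add (h₁.2.2 x hx) (h₂.2.2 x hx))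

lemma CB.intOn {g : ℝ × ℝ → ℝ} {B : ℝ} (h : CB g B) : IntegrableOn g unitSq :=
  integrableOn_unitSq (h.1.mono unitSq_subset_oS) h.2.2

lemma Nice.cb {w : ℝ × ℝ → ℝ} (h : Nice w) : ∃ B, CB w B := by
  obtain ⟨B, hB⟩ := h.bounded
  exact ⟨max B 0, h.continuousOn, le_max_right _ _,
    fun x hx => (hB x hx).trans (le_max_left _ _)⟩

lemma CB.sq_intOn {g : ℝ × ℝ → ℝ} {B : ℝ} (h : CB g B) :
    IntegrableOn (fun x => g x ^ 2) unitSq := by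
  have := h.mul h
  have h2 : CB (fun x => g x ^ 2) (B * B) := by
    refine ⟨?_, this.2.1, fun x hx => by simpa [pow_two] using this.2.2 x hx⟩
    simpa [pow_two] using this.1
  exact h2.intOn

/-! ### commuting partial derivatives through iterates -/

lemma pd_iter_comm {w : ℝ × ℝ → ℝ} (hw : Nice w) (n : ℕ) :
    Set.EqOn (pd₂^[n] (pd₁ w)) (pd₁ (pd₂^[n] w)) oS := by
  induction n with
  | zero => intro x _; rfl
  | succ n ih =>
    intro x hx
    rw [Function.iterate_succ_apply']
    have h1 : pd₂ (pd₂^[n] (pd₁ w)) x = pd₂ (pd₁ (pd₂^[n] w)) x := pd₂_congr ih hx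
    rw [h1, ← (hw.niter n).pd_comm hx]
    have : pd₂^[n + 1] w = pd₂ (pd₂^[n] w) := Function.iterate_succ_apply' pd₂ n w
    rw [this]

/-! ### l2 of a canonical word -/

lemma l2_word_le {F g : ℝ × ℝ → ℝ} {b c m : ℕ}
    (hEq : Set.EqOn g (pd₁^[b] (pd₂^[c] F)) oS) (hbc : b + c ≤ m) :
    l2 g ≤ Real.sqrt (Hsq m F) := by
  unfold l2
  rw [L2sq_congr (hEq.mono unitSq_subset_oS)]
  exact Real.sqrt_le_sqrt (L2sq_le_Hsq hbc F)

lemma L2sq_word_le {F g : ℝ × ℝ → ℝ} {b c m : ℕ}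
    (hEq : Set.EqOn g (pd₁^[b] (pd₂^[c] F)) oS) (hbc : b + c ≤ m) :
    L2sq g ≤ Hsq m F := by
  rw [L2sq_congr (hEq.mono unitSq_subset_oS)]
  exact L2sq_le_Hsq hbc F

/-- Combined sup bound via the H^s norm. -/
lemma sup_via {F g : ℝ × ℝ → ℝ} {m : ℕ} (hg : Nice g)
    {b₀ c₀ b₁ c₁ b₂ c₂ b₃ c₃ : ℕ}
    (h₀ : Set.EqOn g (pd₁^[b₀] (pd₂^[c₀] F)) oS) (hbc₀ : b₀ + c₀ ≤ m)
    (h₁ : Set.EqOn (pd₁ g) (pd₁^[b₁] (pd₂^[c₁] F)) oS) (hbc₁ : b₁ + c₁ ≤ m)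
    (h₂ : Set.EqOn (pd₂ g) (pd₁^[b₂] (pd₂^[c₂] F)) oS) (hbc₂ : b₂ + c₂ ≤ m)
    (h₃ : Set.EqOn (pd₁ (pd₂ g)) (pd₁^[b₃] (pd₂^[c₃] F)) oS) (hbc₃ : b₃ + c₃ ≤ m) :
    ∀ x ∈ unitSq, |g x| ≤ 16 * Real.sqrt (Hsq m F) := by
  intro x hx
  have hsup := sup_bound hg hx
  have habs : ∀ (h : ℝ × ℝ → ℝ), Nice h → l2 h ≤ Real.sqrt (Hsq m F) →
      ∫ y in unitSq, |h y| ≤ Real.sqrt (Hsq m F) := by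
    intro h hn hl
    obtain ⟨B, hB⟩ := hn.cb
    exact le_trans (abs_integral_le_l2 hB.intOn hB.sq_intOn) hl
  have t0 := habs g hg (l2_word_le h₀ hbc₀)
  have t1 := habs (pd₁ g) hg.npd₁ (l2_word_le h₁ hbc₁)
  have t2 := habs (pd₂ g) hg.npd₂ (l2_word_le h₂ hbc₂)
  have t3 := habs (pd₁ (pd₂ g)) hg.npd₂.npd₁ (l2_word_le h₃ hbc₃)
  linarith [hsup, t0, t1, t2, t3]

/-! ### quadratic integral bound -/

lemma integral_coeff_quad_bound {h p q : ℝ × ℝ → ℝ} {K Bp Bq : ℝ}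
    (hh : ContinuousOn h oS) (hK : 0 ≤ K) (hKb : ∀ x ∈ unitSq, |h x| ≤ K)
    (hp : CB p Bp) (hq : CB q Bq) :
    |∫ x in unitSq, h x * (p x * q x)| ≤ K * (L2sq p + L2sq q) / 2 := by
  have hCB : CB h K := ⟨hh, hK, hKb⟩
  have hint : IntegrableOn (fun x => h x * (p x * q x)) unitSq :=
    (hCB.mul (hp.mul hq)).intOn
  have hrhsint : IntegrableOn (fun x => K * (p x ^ 2 + q x ^ 2) / 2) unitSq := by
    have := (hp.sq_intOn.add hq.sq_intOn).const_mul K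
    simpa [mul_div_assoc, IntegrableOn] using this.div_const 2
  calc |∫ x in unitSq, h x * (p x * q x)|
      ≤ ∫ x in unitSq, |h x * (p x * q x)| := by
        rw [← Real.norm_eq_abs]
        exact (norm_integral_le_integral_norm _).trans
          (le_of_eq (by simp only [Real.norm_eq_abs]))
    _ ≤ ∫ x in unitSq, K * (p x ^ 2 + q x ^ 2) / 2 := by
        refine setIntegral_mono_on hint.abs hrhsint measurableSet_unitSq ?_
        intro x hx
        have h1 : |h x * (p x * q x)| = |h x| * (|p x| * |q x|) := by
          rw [abs_mul, abs_mul]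
        rw [h1]
        have h2 : |p x| * |q x| ≤ (p x ^ 2 + q x ^ 2) / 2 := by
          nlinarith [sq_nonneg (|p x| - |q x|), sq_abs (p x), sq_abs (q x)]
        have h3 : |h x| * (|p x| * |q x|) ≤ K * ((p x ^ 2 + q x ^ 2) / 2) := by
          refine mul_le_mul (hKb x hx) h2 (by positivity) hK
        linarith [h3]
    _ = K * (L2sq p + L2sq q) / 2 := by
        rw [show (fun x => K * (p x ^ 2 + q x ^ 2) / 2) =
          (fun x => (K / 2) * (p x ^ 2 + q x ^ 2)) from by funext x; ring]
        rw [MeasureTheory.integral_const_mul,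
          integral_add hp.sq_intOn hq.sq_intOn]
        unfold L2sq
        ring

/-! ### periodicity of coefficients -/

def PerC (g : (ℝ × ℝ) × ℝ × ℝ → ℝ) : Prop :=
  ∀ (x₁ x₂ : ℝ) (z : ℝ × ℝ), g ((x₁, x₂ + 1), z) = g ((x₁, x₂), z)

lemma PerC.pdz₁ {g : (ℝ × ℝ) × ℝ × ℝ → ℝ} (h : PerC g) : PerC (dz₁ g) := by
  intro x₁ x₂ z
  unfold dz₁
  simp only
  congr 1
  funext t
  exact h x₁ x₂ (t, z.2)

lemma PerC.pdz₂ {g : (ℝ × ℝ) × ℝ × ℝ → ℝ} (h : PerC g) : PerC (dz₂ g) := by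
  intro x₁ x₂ z
  unfold dz₂
  simp only
  congr 1
  funext t
  exact h x₁ x₂ (z.1, t)

lemma perC_A₁ {a : (ℝ × ℝ) × ℝ × ℝ → ℝ × ℝ} (h : PerA a) : PerC (A₁ a) := by
  intro x₁ x₂ z
  unfold A₁
  rw [h x₁ x₂ z]

lemma perC_A₂ {a : (ℝ × ℝ) × ℝ × ℝ → ℝ × ℝ} (h : PerA a) : PerC (A₂ a) := by
  intro x₁ x₂ z
  unfold A₂
  rw [h x₁ x₂ z]

lemma per_comp {f : (ℝ × ℝ) × ℝ × ℝ → ℝ} {F : ℝ × ℝ → ℝ}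
    (hf : PerC f) (h1 : Per1 (pd₁ F)) (h2 : Per1 (pd₂ F)) :
    Per1 (fun x => f (x, gradc F x)) := by
  intro x₁ x₂
  have hg : gradc F (x₁, x₂ + 1) = gradc F (x₁, x₂) := by
    unfold gradc
    rw [h1 x₁ x₂, h2 x₁ x₂]
  simp only
  rw [hg]
  exact hf x₁ x₂ (gradc F (x₁, x₂))

lemma Per1.pmul {f g : ℝ × ℝ → ℝ} (hf : Per1 f) (hg : Per1 g) :
    Per1 (fun x => f x * g x) := by
  intro x₁ x₂; simp only; rw [hf x₁ x₂, hg x₁ x₂]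

lemma Per1.padd {f g : ℝ × ℝ → ℝ} (hf : Per1 f) (hg : Per1 g) :
    Per1 (fun x => f x + g x) := by
  intro x₁ x₂; simp only; rw [hf x₁ x₂, hg x₁ x₂]

lemma CB.const_mul {g : ℝ × ℝ → ℝ} {B : ℝ} (h : CB g B) (c : ℝ) :
    CB (fun x => c * g x) (|c| * B) := by
  refine ⟨h.1.const_smul c, mul_nonneg (abs_nonneg c) h.2.1, fun x hx => ?_⟩
  rw [abs_mul]
  exact mul_le_mul_of_nonneg_left (h.2.2 x hx) (abs_nonneg c)

/-- Integration by parts for a coefficient times a quadratic expression. -/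
lemma ibp_quad {G Gd p q : ℝ × ℝ → ℝ} {BG BGd Bp Bq Bp' Bq' : ℝ}
    (hGd : ∀ x ∈ oS, HasDerivAt (fun t => G (x.1, t)) (Gd x) x.2)
    (cbG : CB G BG) (cbGd : CB Gd BGd) (hGper : Per1 G)
    (hp : Nice p) (hq : Nice q) (cbp : CB p Bp) (cbq : CB q Bq)
    (cbp' : CB (pd₂ p) Bp') (cbq' : CB (pd₂ q) Bq')
    (hpper : Per1 p) (hqper : Per1 q) :
    ∫ x in unitSq, G x * (pd₂ p x * q x + p x * pd₂ q x) =
      - ∫ x in unitSq, Gd x * (p x * q x) := by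
  have hX : IntegrableOn (fun x => Gd x * (p x * q x)) unitSq :=
    (cbGd.mul (cbp.mul cbq)).intOn
  have hY : IntegrableOn (fun x => G x * (pd₂ p x * q x + p x * pd₂ q x)) unitSq :=
    (cbG.mul ((cbp'.mul cbq).add (cbp.mul cbq'))).intOn
  have hH : ∀ x ∈ oS, HasDerivAt (fun t => G (x.1, t) * (p (x.1, t) * q (x.1, t)))
      (Gd x * (p x * q x) + G x * (pd₂ p x * q x + p x * pd₂ q x)) x.2 := by
    intro x hx
    have h := (hGd x hx).mul ((hp.hasDerivAt₂ hx).mul (hq.hasDerivAt₂ hx))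
    simpa [Pi.mul_def] using h
  have hcont : ContinuousOn
      (fun x => Gd x * (p x * q x) + G x * (pd₂ p x * q x + p x * pd₂ q x)) oS :=
    (cbGd.1.mul (cbp.1.mul cbq.1)).add
      (cbG.1.mul ((cbp'.1.mul cbq.1).add (cbp.1.mul cbq'.1)))
  have hint : IntegrableOn
      (fun x => Gd x * (p x * q x) + G x * (pd₂ p x * q x + p x * pd₂ q x)) unitSq :=
    hX.add hY
  have hper' : ∀ x₁ x₂ : ℝ,
      G (x₁, x₂ + 1) * (p (x₁, x₂ + 1) * q (x₁, x₂ + 1)) =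
        G (x₁, x₂) * (p (x₁, x₂) * q (x₁, x₂)) :=
    hGper.pmul (hpper.pmul hqper)
  have h0 := integral_pd₂_eq_zero (H := fun x => G x * (p x * q x)) hH hcont hint hper'
  rw [integral_add hX hY] at h0
  linarith


set_option maxHeartbeats 16000000 in
theorem stmt_15 (s : ℕ) (hs : 5 ≤ s) (a : (ℝ × ℝ) × ℝ × ℝ → ℝ × ℝ)
    (ha : ContDiffOn ℝ ((s : ℕ∞) + 1) a slab4) (haper : PerA a) (hsym : SymA a) :
    ∃ C : ℝ, 0 < C ∧ ∃ r₀ : ℝ, 0 < r₀ ∧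
      ∀ F : ℝ × ℝ → ℝ, ContDiffOn ℝ (⊤ : ℕ∞) F strip → Per1 F → Dir F →
        Real.sqrt (Hsq s F) ≤ r₀ →
        |I₂ s a F + I₃ s a F| ≤ C * Real.sqrt (Hsq s F) ^ 3 := by
  obtain ⟨n, rfl⟩ : ∃ n : ℕ, s = n + 1 := ⟨s - 1, by omega⟩
  have hn : 4 ≤ n := by omega
  -- regularity of the coefficients
  have ha6 : ContDiffOn ℝ ((6:ℕ) : ℕ∞) a slab4 := by
    refine ha.of_le ?_
    have h1 : ((6:ℕ) : ℕ∞) ≤ (((n+1:ℕ)) : ℕ∞) + 1 := by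
      rw [show (((n+1:ℕ)) : ℕ∞) + 1 = ((n+2:ℕ) : ℕ∞) by push_cast; ring]
      have h2 : (6:ℕ) ≤ n + 2 := by omega
      exact_mod_cast h2
    exact_mod_cast h1
  have hA₁ : CNice 6 (A₁ a) := ⟨A₁ a, contDiff_fst.comp_contDiffOn ha6, fun w _ => rfl⟩
  have hA₂ : CNice 6 (A₂ a) := ⟨A₂ a, contDiff_snd.comp_contDiffOn ha6, fun w _ => rfl⟩
  have hc1 : CNice 4 (dz₁ (dz₂ (A₁ a))) :=
    CNice.cdz₁ (CNice.cdz₂ (show CNice (4+1+1) (A₁ a) from hA₁))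
  have hc2 : CNice 4 (dz₂ (dz₂ (A₁ a))) :=
    CNice.cdz₂ (CNice.cdz₂ (show CNice (4+1+1) (A₁ a) from hA₁))
  have hd1 : CNice 4 (dz₁ (dz₁ (A₁ a))) :=
    CNice.cdz₁ (CNice.cdz₁ (show CNice (4+1+1) (A₁ a) from hA₁))
  have hd2 : CNice 4 (dz₂ (dz₁ (A₁ a))) :=
    CNice.cdz₂ (CNice.cdz₁ (show CNice (4+1+1) (A₁ a) from hA₁))
  have he1 : CNice 4 (dz₁ (dz₂ (A₂ a))) :=
    CNice.cdz₁ (CNice.cdz₂ (show CNice (4+1+1) (A₂ a) from hA₂))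
  have he2 : CNice 4 (dz₂ (dz₂ (A₂ a))) :=
    CNice.cdz₂ (CNice.cdz₂ (show CNice (4+1+1) (A₂ a) from hA₂))
  -- uniform coefficient bounds with R = 16
  obtain ⟨M₁, hM₁0, hM₁⟩ := comp_coeff (hc1.of_le (by norm_num)) 16
  obtain ⟨M₂, hM₂0, hM₂⟩ := comp_coeff (hc2.of_le (by norm_num)) 16
  obtain ⟨M₃, hM₃0, hM₃⟩ := comp_coeff (hd1.of_le (by norm_num)) 16
  obtain ⟨M₄, hM₄0, hM₄⟩ := comp_coeff (hd2.of_le (by norm_num)) 16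
  obtain ⟨M₅, hM₅0, hM₅⟩ := comp_coeff (he1.of_le (by norm_num)) 16
  obtain ⟨M₆, hM₆0, hM₆⟩ := comp_coeff (he2.of_le (by norm_num)) 16
  set SM : ℝ := M₁ + M₂ + M₃ + M₄ + M₅ + M₆ + 1 with hSMdef
  have hSM1 : (1:ℝ) ≤ SM := by simp only [hSMdef]; linarith
  have hSM0 : (0:ℝ) ≤ SM := by linarith
  clear_value SM
  refine ⟨2176 * (n + 1 : ℝ) * SM, by positivity, 1, one_pos, ?_⟩
  intro F hF hper hdir hnorm
  -- basic facts about F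
  have hNF : Nice F := ⟨F, hF, fun x _ => rfl⟩
  set nrm : ℝ := Real.sqrt (Hsq (n+1) F) with hnrmdef
  have hnrm0 : 0 ≤ nrm := Real.sqrt_nonneg _
  have hnrm1 : nrm ≤ 1 := hnorm
  have hHsq : Hsq (n+1) F = nrm ^ 2 := (Real.sq_sqrt (Hsq_nonneg _ _)).symm
  -- canonical-word equalities
  have comm1 : ∀ c : ℕ, Set.EqOn (pd₂^[c] (pd₁ F)) (pd₁^[1] (pd₂^[c] F)) oS := by
    intro c
    rw [Function.iterate_one]
    exact pd_iter_comm hNF c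
  have comm2 : ∀ c : ℕ, Set.EqOn (pd₁ (pd₂^[c] (pd₁ F))) (pd₁^[2] (pd₂^[c] F)) oS := by
    intro c x hx
    have e2 : pd₁^[2] (pd₂^[c] F) = pd₁ (pd₁^[1] (pd₂^[c] F)) :=
      Function.iterate_succ_apply' pd₁ 1 (pd₂^[c] F)
    rw [e2, Function.iterate_one]
    exact pd₁_congr (pd_iter_comm hNF c) hx
  -- sup bounds for the low-order words
  have hsup1 : ∀ x ∈ unitSq, |pd₁ F x| ≤ 16 * nrm := by
    refine sup_via hNF.npd₁ (b₀ := 1) (c₀ := 0) (fun x _ => rfl) (by omega)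
      (b₁ := 2) (c₁ := 0) (fun x _ => rfl) (by omega)
      (b₂ := 1) (c₂ := 1) (comm1 1) (by omega)
      (b₃ := 2) (c₃ := 1) (comm2 1) (by omega)
  have hsup2 : ∀ x ∈ unitSq, |pd₂ F x| ≤ 16 * nrm := by
    refine sup_via hNF.npd₂ (b₀ := 0) (c₀ := 1) (fun x _ => rfl) (by omega)
      (b₁ := 1) (c₁ := 1) (fun x _ => rfl) (by omega)
      (b₂ := 0) (c₂ := 2) (fun x _ => rfl) (by omega)
      (b₃ := 1) (c₃ := 2) (fun x _ => rfl) (by omega)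
  have hsupv₁ : ∀ x ∈ unitSq, |pd₂ (pd₁ F) x| ≤ 16 * nrm := by
    refine sup_via hNF.npd₁.npd₂ (b₀ := 1) (c₀ := 1) (comm1 1) (by omega)
      (b₁ := 2) (c₁ := 1) (comm2 1) (by omega)
      (b₂ := 1) (c₂ := 2) (comm1 2) (by omega)
      (b₃ := 2) (c₃ := 2) (comm2 2) (by omega)
  have hsupv₂ : ∀ x ∈ unitSq, |pd₂ (pd₂ F) x| ≤ 16 * nrm := by
    refine sup_via hNF.npd₂.npd₂ (b₀ := 0) (c₀ := 2) (fun x _ => rfl) (by omega)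
      (b₁ := 1) (c₁ := 2) (fun x _ => rfl) (by omega)
      (b₂ := 0) (c₂ := 3) (fun x _ => rfl) (by omega)
      (b₃ := 1) (c₃ := 3) (fun x _ => rfl) (by omega)
  have hsuppv₁ : ∀ x ∈ unitSq, |pd₂ (pd₂ (pd₁ F)) x| ≤ 16 * nrm := by
    refine sup_via hNF.npd₁.npd₂.npd₂ (b₀ := 1) (c₀ := 2) (comm1 2) (by omega)
      (b₁ := 2) (c₁ := 2) (comm2 2) (by omega)
      (b₂ := 1) (c₂ := 3) (comm1 3) (by omega)
      (b₃ := 2) (c₃ := 3) (comm2 3) (by omega)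
  have hsuppv₂ : ∀ x ∈ unitSq, |pd₂ (pd₂ (pd₂ F)) x| ≤ 16 * nrm := by
    refine sup_via hNF.npd₂.npd₂.npd₂ (b₀ := 0) (c₀ := 3) (fun x _ => rfl) (by omega)
      (b₁ := 1) (c₁ := 3) (fun x _ => rfl) (by omega)
      (b₂ := 0) (c₂ := 4) (fun x _ => rfl) (by omega)
      (b₃ := 1) (c₃ := 4) (fun x _ => rfl) (by omega)

  -- gradient stays in the ball of radius 16
  have hgradR : ∀ x ∈ unitSq, ‖gradc F x‖ ≤ 16 := by
    intro x hx
    have h1 := hsup1 x hx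
    have h2 := hsup2 x hx
    have hn16 : 16 * nrm ≤ 16 := by nlinarith
    have : ‖gradc F x‖ = max ‖pd₁ F x‖ ‖pd₂ F x‖ := rfl
    rw [this, Real.norm_eq_abs, Real.norm_eq_abs]
    exact max_le (by linarith) (by linarith)
  -- the six composed coefficients and their vertical derivatives
  obtain ⟨Cd₁, hCd₁, hCc₁, hCb₁, hCdc₁, hCdb₁⟩ := hM₁ F hNF.npd₁ hNF.npd₂ hgradR
  obtain ⟨Cd₂, hCd₂, hCc₂, hCb₂, hCdc₂, hCdb₂⟩ := hM₂ F hNF.npd₁ hNF.npd₂ hgradR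
  obtain ⟨Cd₃, hCd₃, hCc₃, hCb₃, hCdc₃, hCdb₃⟩ := hM₃ F hNF.npd₁ hNF.npd₂ hgradR
  obtain ⟨Cd₄, hCd₄, hCc₄, hCb₄, hCdc₄, hCdb₄⟩ := hM₄ F hNF.npd₁ hNF.npd₂ hgradR
  obtain ⟨Cd₅, hCd₅, hCc₅, hCb₅, hCdc₅, hCdb₅⟩ := hM₅ F hNF.npd₁ hNF.npd₂ hgradR
  obtain ⟨Cd₆, hCd₆, hCc₆, hCb₆, hCdc₆, hCdb₆⟩ := hM₆ F hNF.npd₁ hNF.npd₂ hgradR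
  -- Nice data for the high-order words
  have nu₁ : Nice (pd₂^[n] (pd₁ F)) := (hNF.npd₁).niter n
  have nu₂ : Nice (pd₂^[n] (pd₂ F)) := (hNF.npd₂).niter n
  have nv₁ : Nice (pd₂ (pd₁ F)) := hNF.npd₁.npd₂
  have nv₂ : Nice (pd₂ (pd₂ F)) := hNF.npd₂.npd₂
  -- CB data
  obtain ⟨Bu₁, cbu₁⟩ := nu₁.cb
  obtain ⟨Bu₂, cbu₂⟩ := nu₂.cb
  obtain ⟨Bpu₁, cbpu₁⟩ := nu₁.npd₂.cb
  obtain ⟨Bpu₂, cbpu₂⟩ := nu₂.npd₂.cb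
  have cbv₁ : CB (pd₂ (pd₁ F)) (16 * nrm) :=
    ⟨nv₁.continuousOn, by positivity, hsupv₁⟩
  have cbv₂ : CB (pd₂ (pd₂ F)) (16 * nrm) :=
    ⟨nv₂.continuousOn, by positivity, hsupv₂⟩
  have cbpv₁ : CB (pd₂ (pd₂ (pd₁ F))) (16 * nrm) :=
    ⟨nv₁.npd₂.continuousOn, by positivity, hsuppv₁⟩
  have cbpv₂ : CB (pd₂ (pd₂ (pd₂ F))) (16 * nrm) :=
    ⟨nv₂.npd₂.continuousOn, by positivity, hsuppv₂⟩
  have cbC₁ : CB (fun x => dz₁ (dz₂ (A₁ a)) (x, gradc F x)) M₁ := ⟨hCc₁, hM₁0, hCb₁⟩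
  have cbC₂ : CB (fun x => dz₂ (dz₂ (A₁ a)) (x, gradc F x)) M₂ := ⟨hCc₂, hM₂0, hCb₂⟩
  have cbC₃ : CB (fun x => dz₁ (dz₁ (A₁ a)) (x, gradc F x)) M₃ := ⟨hCc₃, hM₃0, hCb₃⟩
  have cbC₄ : CB (fun x => dz₂ (dz₁ (A₁ a)) (x, gradc F x)) M₄ := ⟨hCc₄, hM₄0, hCb₄⟩
  have cbC₅ : CB (fun x => dz₁ (dz₂ (A₂ a)) (x, gradc F x)) M₅ := ⟨hCc₅, hM₅0, hCb₅⟩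
  have cbC₆ : CB (fun x => dz₂ (dz₂ (A₂ a)) (x, gradc F x)) M₆ := ⟨hCc₆, hM₆0, hCb₆⟩
  have hMSM : M₁ ≤ SM ∧ M₂ ≤ SM ∧ M₃ ≤ SM ∧ M₄ ≤ SM ∧ M₅ ≤ SM ∧ M₆ ≤ SM := by
    refine ⟨?_, ?_, ?_, ?_, ?_, ?_⟩ <;> simp only [hSMdef] <;> linarith
  have hCdbound : ∀ (Cd : ℝ × ℝ → ℝ) (M : ℝ), 0 ≤ M → M ≤ SM →
      (∀ x ∈ unitSq, |Cd x| ≤ M * (1 + |pd₂ (pd₁ F) x| + |pd₂ (pd₂ F) x|)) →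
      ∀ x ∈ unitSq, |Cd x| ≤ 33 * SM := by
    intro Cd M hM0 hMS hb x hx
    have h1 := hsupv₁ x hx
    have h2 := hsupv₂ x hx
    have hb' := hb x hx
    have hx1 : |pd₂ (pd₁ F) x| ≤ 16 := by nlinarith
    have hx2 : |pd₂ (pd₂ F) x| ≤ 16 := by nlinarith
    nlinarith [abs_nonneg (pd₂ (pd₁ F) x), abs_nonneg (pd₂ (pd₂ F) x)]
  have cbCd₁ : CB Cd₁ (33 * SM) :=
    ⟨hCdc₁, by positivity, hCdbound Cd₁ M₁ hM₁0 hMSM.1 hCdb₁⟩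
  have cbCd₂ : CB Cd₂ (33 * SM) :=
    ⟨hCdc₂, by positivity, hCdbound Cd₂ M₂ hM₂0 hMSM.2.1 hCdb₂⟩
  have cbCd₃ : CB Cd₃ (33 * SM) :=
    ⟨hCdc₃, by positivity, hCdbound Cd₃ M₃ hM₃0 hMSM.2.2.1 hCdb₃⟩
  have cbCd₄ : CB Cd₄ (33 * SM) :=
    ⟨hCdc₄, by positivity, hCdbound Cd₄ M₄ hM₄0 hMSM.2.2.2.1 hCdb₄⟩
  have cbCd₅ : CB Cd₅ (33 * SM) :=
    ⟨hCdc₅, by positivity, hCdbound Cd₅ M₅ hM₅0 hMSM.2.2.2.2.1 hCdb₅⟩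
  have cbCd₆ : CB Cd₆ (33 * SM) :=
    ⟨hCdc₆, by positivity, hCdbound Cd₆ M₆ hM₆0 hMSM.2.2.2.2.2 hCdb₆⟩

  -- periodicity facts
  have perp₁ : Per1 (pd₁ F) := hper.ppd₁
  have perp₂ : Per1 (pd₂ F) := hper.ppd₂
  have perv₁ : Per1 (pd₂ (pd₁ F)) := perp₁.ppd₂
  have perv₂ : Per1 (pd₂ (pd₂ F)) := perp₂.ppd₂
  have peru₁ : Per1 (pd₂^[n] (pd₁ F)) := perp₁.iter_pd₂ n
  have peru₂ : Per1 (pd₂^[n] (pd₂ F)) := perp₂.iter_pd₂ n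
  have perC₁ : Per1 (fun x => dz₁ (dz₂ (A₁ a)) (x, gradc F x)) :=
    per_comp (((perC_A₁ haper).pdz₂).pdz₁) perp₁ perp₂
  have perC₂ : Per1 (fun x => dz₂ (dz₂ (A₁ a)) (x, gradc F x)) :=
    per_comp (((perC_A₁ haper).pdz₂).pdz₂) perp₁ perp₂
  have perC₃ : Per1 (fun x => dz₁ (dz₁ (A₁ a)) (x, gradc F x)) :=
    per_comp (((perC_A₁ haper).pdz₁).pdz₁) perp₁ perp₂
  have perC₄ : Per1 (fun x => dz₂ (dz₁ (A₁ a)) (x, gradc F x)) :=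
    per_comp (((perC_A₁ haper).pdz₁).pdz₂) perp₁ perp₂
  have perC₅ : Per1 (fun x => dz₁ (dz₂ (A₂ a)) (x, gradc F x)) :=
    per_comp (((perC_A₂ haper).pdz₂).pdz₁) perp₁ perp₂
  have perC₆ : Per1 (fun x => dz₂ (dz₂ (A₂ a)) (x, gradc F x)) :=
    per_comp (((perC_A₂ haper).pdz₂).pdz₂) perp₁ perp₂
  -- the three multiplier functions and their vertical derivatives
  have hΦd : ∀ x ∈ oS, HasDerivAt
      (fun t => pd₂ (pd₁ F) (x.1, t) * dz₁ (dz₂ (A₁ a)) ((x.1, t), gradc F (x.1, t)) +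
        pd₂ (pd₂ F) (x.1, t) * dz₂ (dz₂ (A₁ a)) ((x.1, t), gradc F (x.1, t)))
      ((pd₂ (pd₂ (pd₁ F)) x * dz₁ (dz₂ (A₁ a)) (x, gradc F x) + pd₂ (pd₁ F) x * Cd₁ x) +
        (pd₂ (pd₂ (pd₂ F)) x * dz₂ (dz₂ (A₁ a)) (x, gradc F x) + pd₂ (pd₂ F) x * Cd₂ x))
      x.2 := by
    intro x hx
    have h := ((nv₁.hasDerivAt₂ hx).mul (hCd₁ x hx)).add ((nv₂.hasDerivAt₂ hx).mul (hCd₂ x hx))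
    simpa [Pi.mul_def, Pi.add_def] using h
  have hΨd : ∀ x ∈ oS, HasDerivAt
      (fun t => pd₂ (pd₁ F) (x.1, t) * dz₁ (dz₁ (A₁ a)) ((x.1, t), gradc F (x.1, t)) +
        pd₂ (pd₂ F) (x.1, t) * dz₂ (dz₁ (A₁ a)) ((x.1, t), gradc F (x.1, t)))
      ((pd₂ (pd₂ (pd₁ F)) x * dz₁ (dz₁ (A₁ a)) (x, gradc F x) + pd₂ (pd₁ F) x * Cd₃ x) +
        (pd₂ (pd₂ (pd₂ F)) x * dz₂ (dz₁ (A₁ a)) (x, gradc F x) + pd₂ (pd₂ F) x * Cd₄ x))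
      x.2 := by
    intro x hx
    have h := ((nv₁.hasDerivAt₂ hx).mul (hCd₃ x hx)).add ((nv₂.hasDerivAt₂ hx).mul (hCd₄ x hx))
    simpa [Pi.mul_def, Pi.add_def] using h
  have hΞd : ∀ x ∈ oS, HasDerivAt
      (fun t => pd₂ (pd₁ F) (x.1, t) * dz₁ (dz₂ (A₂ a)) ((x.1, t), gradc F (x.1, t)) +
        pd₂ (pd₂ F) (x.1, t) * dz₂ (dz₂ (A₂ a)) ((x.1, t), gradc F (x.1, t)))
      ((pd₂ (pd₂ (pd₁ F)) x * dz₁ (dz₂ (A₂ a)) (x, gradc F x) + pd₂ (pd₁ F) x * Cd₅ x) +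
        (pd₂ (pd₂ (pd₂ F)) x * dz₂ (dz₂ (A₂ a)) (x, gradc F x) + pd₂ (pd₂ F) x * Cd₆ x))
      x.2 := by
    intro x hx
    have h := ((nv₁.hasDerivAt₂ hx).mul (hCd₅ x hx)).add ((nv₂.hasDerivAt₂ hx).mul (hCd₆ x hx))
    simpa [Pi.mul_def, Pi.add_def] using h
  -- CB data for the multipliers
  have cbΦ : CB (fun x => pd₂ (pd₁ F) x * dz₁ (dz₂ (A₁ a)) (x, gradc F x) +
      pd₂ (pd₂ F) x * dz₂ (dz₂ (A₁ a)) (x, gradc F x)) (16 * nrm * M₁ + 16 * nrm * M₂) :=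
    (cbv₁.mul cbC₁).add (cbv₂.mul cbC₂)
  have cbΨ : CB (fun x => pd₂ (pd₁ F) x * dz₁ (dz₁ (A₁ a)) (x, gradc F x) +
      pd₂ (pd₂ F) x * dz₂ (dz₁ (A₁ a)) (x, gradc F x)) (16 * nrm * M₃ + 16 * nrm * M₄) :=
    (cbv₁.mul cbC₃).add (cbv₂.mul cbC₄)
  have cbΞ : CB (fun x => pd₂ (pd₁ F) x * dz₁ (dz₂ (A₂ a)) (x, gradc F x) +
      pd₂ (pd₂ F) x * dz₂ (dz₂ (A₂ a)) (x, gradc F x)) (16 * nrm * M₅ + 16 * nrm * M₆) :=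
    (cbv₁.mul cbC₅).add (cbv₂.mul cbC₆)
  have cbΦd : CB (fun x =>
      (pd₂ (pd₂ (pd₁ F)) x * dz₁ (dz₂ (A₁ a)) (x, gradc F x) + pd₂ (pd₁ F) x * Cd₁ x) +
        (pd₂ (pd₂ (pd₂ F)) x * dz₂ (dz₂ (A₁ a)) (x, gradc F x) + pd₂ (pd₂ F) x * Cd₂ x))
      ((16 * nrm * M₁ + 16 * nrm * (33 * SM)) + (16 * nrm * M₂ + 16 * nrm * (33 * SM))) :=
    ((cbpv₁.mul cbC₁).add (cbv₁.mul cbCd₁)).add ((cbpv₂.mul cbC₂).add (cbv₂.mul cbCd₂))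
  have cbΨd : CB (fun x =>
      (pd₂ (pd₂ (pd₁ F)) x * dz₁ (dz₁ (A₁ a)) (x, gradc F x) + pd₂ (pd₁ F) x * Cd₃ x) +
        (pd₂ (pd₂ (pd₂ F)) x * dz₂ (dz₁ (A₁ a)) (x, gradc F x) + pd₂ (pd₂ F) x * Cd₄ x))
      ((16 * nrm * M₃ + 16 * nrm * (33 * SM)) + (16 * nrm * M₄ + 16 * nrm * (33 * SM))) :=
    ((cbpv₁.mul cbC₃).add (cbv₁.mul cbCd₃)).add ((cbpv₂.mul cbC₄).add (cbv₂.mul cbCd₄))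
  have cbΞd : CB (fun x =>
      (pd₂ (pd₂ (pd₁ F)) x * dz₁ (dz₂ (A₂ a)) (x, gradc F x) + pd₂ (pd₁ F) x * Cd₅ x) +
        (pd₂ (pd₂ (pd₂ F)) x * dz₂ (dz₂ (A₂ a)) (x, gradc F x) + pd₂ (pd₂ F) x * Cd₆ x))
      ((16 * nrm * M₅ + 16 * nrm * (33 * SM)) + (16 * nrm * M₆ + 16 * nrm * (33 * SM))) :=
    ((cbpv₁.mul cbC₅).add (cbv₁.mul cbCd₅)).add ((cbpv₂.mul cbC₆).add (cbv₂.mul cbCd₆))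
  -- periodicity of the multipliers
  have perΦ : Per1 (fun x => pd₂ (pd₁ F) x * dz₁ (dz₂ (A₁ a)) (x, gradc F x) +
      pd₂ (pd₂ F) x * dz₂ (dz₂ (A₁ a)) (x, gradc F x)) :=
    (perv₁.pmul perC₁).padd (perv₂.pmul perC₂)
  have perΨ : Per1 (fun x => pd₂ (pd₁ F) x * dz₁ (dz₁ (A₁ a)) (x, gradc F x) +
      pd₂ (pd₂ F) x * dz₂ (dz₁ (A₁ a)) (x, gradc F x)) :=
    (perv₁.pmul perC₃).padd (perv₂.pmul perC₄)
  have perΞ : Per1 (fun x => pd₂ (pd₁ F) x * dz₁ (dz₂ (A₂ a)) (x, gradc F x) +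
      pd₂ (pd₂ F) x * dz₂ (dz₂ (A₂ a)) (x, gradc F x)) :=
    (perv₁.pmul perC₅).padd (perv₂.pmul perC₆)
  -- the three integration-by-parts identities
  have hIBP_A := ibp_quad hΦd cbΦ cbΦd perΦ nu₁ nu₂ cbu₁ cbu₂ cbpu₁ cbpu₂ peru₁ peru₂
  have hIBP_B := ibp_quad hΨd cbΨ cbΨd perΨ nu₁ nu₁ cbu₁ cbu₁ cbpu₁ cbpu₁ peru₁ peru₁
  have hIBP_C := ibp_quad hΞd cbΞ cbΞd perΞ nu₂ nu₂ cbu₂ cbu₂ cbpu₂ cbpu₂ peru₂ peru₂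

  -- integrability of the three "bad" integrals
  have intXA := (cbΦd.mul (cbu₁.mul cbu₂)).intOn
  have intXB := (cbΨd.mul (cbu₁.mul cbu₁)).intOn
  have intXC := (cbΞd.mul (cbu₂.mul cbu₂)).intOn
  have intYB := (cbΨ.mul ((cbpu₁.mul cbu₁).add (cbu₁.mul cbpu₁))).intOn
  have intYC := (cbΞ.mul ((cbpu₂.mul cbu₂).add (cbu₂.mul cbpu₂))).intOn
  -- rewrite I₂ via integration by parts
  have hI₂eq : I₂ (n+1) a F = ((n+1:ℕ):ℝ) *
      (- ∫ x in unitSq,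
        ((pd₂ (pd₂ (pd₁ F)) x * dz₁ (dz₂ (A₁ a)) (x, gradc F x) + pd₂ (pd₁ F) x * Cd₁ x) +
         (pd₂ (pd₂ (pd₂ F)) x * dz₂ (dz₂ (A₁ a)) (x, gradc F x) + pd₂ (pd₂ F) x * Cd₂ x)) *
        (pd₂^[n] (pd₁ F) x * pd₂^[n] (pd₂ F) x)) := by
    rw [← hIBP_A]
    unfold I₂
    rw [← MeasureTheory.integral_const_mul]
    refine setIntegral_congr_fun measurableSet_unitSq ?_
    intro x hx
    have hw : ((x, gradc F x) : (ℝ × ℝ) × ℝ × ℝ) ∈ slab4 :=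
      ⟨⟨Set.Ioo_subset_Icc_self hx.1, trivial⟩, trivial⟩
    simp only [Nat.add_sub_cancel]
    rw [Function.iterate_succ_apply' pd₂ n (pd₁ F), Function.iterate_succ_apply' pd₂ n (pd₂ F),
      sym_dz₁ hsym hw, sym_dz₂ hsym hw]
    ring
  -- rewrite I₃ via integration by parts
  have hsplit₃ : ∫ x in unitSq,
      ((fun x => pd₂ (pd₁ F) x * dz₁ (dz₁ (A₁ a)) (x, gradc F x) +
          pd₂ (pd₂ F) x * dz₂ (dz₁ (A₁ a)) (x, gradc F x)) x *
        (pd₂ (pd₂^[n] (pd₁ F)) x * pd₂^[n] (pd₁ F) x +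
          pd₂^[n] (pd₁ F) x * pd₂ (pd₂^[n] (pd₁ F)) x) / 2 +
       (fun x => pd₂ (pd₁ F) x * dz₁ (dz₂ (A₂ a)) (x, gradc F x) +
          pd₂ (pd₂ F) x * dz₂ (dz₂ (A₂ a)) (x, gradc F x)) x *
        (pd₂ (pd₂^[n] (pd₂ F)) x * pd₂^[n] (pd₂ F) x +
          pd₂^[n] (pd₂ F) x * pd₂ (pd₂^[n] (pd₂ F)) x) / 2) =
      (∫ x in unitSq,
        (fun x => pd₂ (pd₁ F) x * dz₁ (dz₁ (A₁ a)) (x, gradc F x) +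
          pd₂ (pd₂ F) x * dz₂ (dz₁ (A₁ a)) (x, gradc F x)) x *
        (pd₂ (pd₂^[n] (pd₁ F)) x * pd₂^[n] (pd₁ F) x +
          pd₂^[n] (pd₁ F) x * pd₂ (pd₂^[n] (pd₁ F)) x)) / 2 +
      (∫ x in unitSq,
        (fun x => pd₂ (pd₁ F) x * dz₁ (dz₂ (A₂ a)) (x, gradc F x) +
          pd₂ (pd₂ F) x * dz₂ (dz₂ (A₂ a)) (x, gradc F x)) x *
        (pd₂ (pd₂^[n] (pd₂ F)) x * pd₂^[n] (pd₂ F) x +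
          pd₂^[n] (pd₂ F) x * pd₂ (pd₂^[n] (pd₂ F)) x)) / 2 := by
    rw [integral_add (intYB.div_const 2) (intYC.div_const 2), integral_div, integral_div]
  have hI₃eq : I₃ (n+1) a F = ((n+1:ℕ):ℝ) *
      ((- ∫ x in unitSq,
        ((pd₂ (pd₂ (pd₁ F)) x * dz₁ (dz₁ (A₁ a)) (x, gradc F x) + pd₂ (pd₁ F) x * Cd₃ x) +
         (pd₂ (pd₂ (pd₂ F)) x * dz₂ (dz₁ (A₁ a)) (x, gradc F x) + pd₂ (pd₂ F) x * Cd₄ x)) *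
        (pd₂^[n] (pd₁ F) x * pd₂^[n] (pd₁ F) x)) / 2 +
       (- ∫ x in unitSq,
        ((pd₂ (pd₂ (pd₁ F)) x * dz₁ (dz₂ (A₂ a)) (x, gradc F x) + pd₂ (pd₁ F) x * Cd₅ x) +
         (pd₂ (pd₂ (pd₂ F)) x * dz₂ (dz₂ (A₂ a)) (x, gradc F x) + pd₂ (pd₂ F) x * Cd₆ x)) *
        (pd₂^[n] (pd₂ F) x * pd₂^[n] (pd₂ F) x)) / 2) := by
    rw [← hIBP_B, ← hIBP_C, ← hsplit₃]
    unfold I₃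
    rw [← MeasureTheory.integral_const_mul]
    refine setIntegral_congr_fun measurableSet_unitSq ?_
    intro x hx
    simp only [Nat.add_sub_cancel]
    rw [Function.iterate_succ_apply' pd₂ n (pd₁ F), Function.iterate_succ_apply' pd₂ n (pd₂ F)]
    ring

  -- L² bounds on the top-order words
  have hL1 : L2sq (pd₂^[n] (pd₁ F)) ≤ nrm ^ 2 := by
    rw [← hHsq]
    exact L2sq_word_le (comm1 n) (by omega)
  have hL2 : L2sq (pd₂^[n] (pd₂ F)) ≤ nrm ^ 2 := by
    rw [← hHsq]
    exact L2sq_word_le (b := 0) (c := n+1) (fun x _ => rfl) (by omega)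
  have hL1nn := L2sq_nonneg (pd₂^[n] (pd₁ F))
  have hL2nn := L2sq_nonneg (pd₂^[n] (pd₂ F))
  -- uniform bound on the three derivative multipliers
  have hKnn : (0:ℝ) ≤ 1088 * SM * nrm := by positivity
  have hgen : ∀ (c₁ c₂ : (ℝ × ℝ) × ℝ × ℝ → ℝ) (Cd Cd' : ℝ × ℝ → ℝ) (Mc₁ Mc₂ : ℝ),
      Mc₁ ≤ SM → Mc₂ ≤ SM →
      (∀ x ∈ unitSq, |c₁ (x, gradc F x)| ≤ Mc₁) →
      (∀ x ∈ unitSq, |c₂ (x, gradc F x)| ≤ Mc₂) →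
      (∀ x ∈ unitSq, |Cd x| ≤ 33 * SM) →
      (∀ x ∈ unitSq, |Cd' x| ≤ 33 * SM) →
      ∀ x ∈ unitSq,
        |(pd₂ (pd₂ (pd₁ F)) x * c₁ (x, gradc F x) + pd₂ (pd₁ F) x * Cd x) +
         (pd₂ (pd₂ (pd₂ F)) x * c₂ (x, gradc F x) + pd₂ (pd₂ F) x * Cd' x)| ≤
        1088 * SM * nrm := by
    intro c₁ c₂ Cd Cd' Mc₁ Mc₂ hMc₁ hMc₂ hb₁ hb₂ hbd hbd' x hx
    have e₁ := hsuppv₁ x hx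
    have e₂ := hsuppv₂ x hx
    have e₃ := hsupv₁ x hx
    have e₄ := hsupv₂ x hx
    have hMc₁0 : 0 ≤ Mc₁ := le_trans (abs_nonneg _) (hb₁ x hx)
    have hMc₂0 : 0 ≤ Mc₂ := le_trans (abs_nonneg _) (hb₂ x hx)
    have p₁ : |pd₂ (pd₂ (pd₁ F)) x * c₁ (x, gradc F x)| ≤ 16 * nrm * Mc₁ := by
      rw [abs_mul]
      exact mul_le_mul e₁ (hb₁ x hx) (abs_nonneg _) (by positivity)
    have p₂ : |pd₂ (pd₁ F) x * Cd x| ≤ 16 * nrm * (33 * SM) := by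
      rw [abs_mul]
      exact mul_le_mul e₃ (hbd x hx) (abs_nonneg _) (by positivity)
    have p₃ : |pd₂ (pd₂ (pd₂ F)) x * c₂ (x, gradc F x)| ≤ 16 * nrm * Mc₂ := by
      rw [abs_mul]
      exact mul_le_mul e₂ (hb₂ x hx) (abs_nonneg _) (by positivity)
    have p₄ : |pd₂ (pd₂ F) x * Cd' x| ≤ 16 * nrm * (33 * SM) := by
      rw [abs_mul]
      exact mul_le_mul e₄ (hbd' x hx) (abs_nonneg _) (by positivity)
    have tri : |(pd₂ (pd₂ (pd₁ F)) x * c₁ (x, gradc F x) + pd₂ (pd₁ F) x * Cd x) +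
        (pd₂ (pd₂ (pd₂ F)) x * c₂ (x, gradc F x) + pd₂ (pd₂ F) x * Cd' x)| ≤
        |pd₂ (pd₂ (pd₁ F)) x * c₁ (x, gradc F x)| + |pd₂ (pd₁ F) x * Cd x| +
        (|pd₂ (pd₂ (pd₂ F)) x * c₂ (x, gradc F x)| + |pd₂ (pd₂ F) x * Cd' x|) := by
      calc _ ≤ |pd₂ (pd₂ (pd₁ F)) x * c₁ (x, gradc F x) + pd₂ (pd₁ F) x * Cd x| +
          |pd₂ (pd₂ (pd₂ F)) x * c₂ (x, gradc F x) + pd₂ (pd₂ F) x * Cd' x| := abs_add_le _ _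
        _ ≤ _ := add_le_add (abs_add_le _ _) (abs_add_le _ _)
    have hm₁ : 16 * nrm * Mc₁ ≤ 16 * nrm * SM :=
      mul_le_mul_of_nonneg_left hMc₁ (by positivity)
    have hm₂ : 16 * nrm * Mc₂ ≤ 16 * nrm * SM :=
      mul_le_mul_of_nonneg_left hMc₂ (by positivity)
    have hfin : 16 * nrm * SM + 16 * nrm * (33 * SM) + (16 * nrm * SM + 16 * nrm * (33 * SM)) =
        1088 * SM * nrm := by ring
    linarith [tri, p₁, p₂, p₃, p₄, hm₁, hm₂]
  have boundΦd := hgen (dz₁ (dz₂ (A₁ a))) (dz₂ (dz₂ (A₁ a))) Cd₁ Cd₂ M₁ M₂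
    hMSM.1 hMSM.2.1 hCb₁ hCb₂ cbCd₁.2.2 cbCd₂.2.2
  have boundΨd := hgen (dz₁ (dz₁ (A₁ a))) (dz₂ (dz₁ (A₁ a))) Cd₃ Cd₄ M₃ M₄
    hMSM.2.2.1 hMSM.2.2.2.1 hCb₃ hCb₄ cbCd₃.2.2 cbCd₄.2.2
  have boundΞd := hgen (dz₁ (dz₂ (A₂ a))) (dz₂ (dz₂ (A₂ a))) Cd₅ Cd₆ M₅ M₆
    hMSM.2.2.2.2.1 hMSM.2.2.2.2.2 hCb₅ hCb₆ cbCd₅.2.2 cbCd₆.2.2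
  -- bounds on the three integrals
  have hQA := integral_coeff_quad_bound cbΦd.1 hKnn boundΦd cbu₁ cbu₂
  have hQB := integral_coeff_quad_bound cbΨd.1 hKnn boundΨd cbu₁ cbu₁
  have hQC := integral_coeff_quad_bound cbΞd.1 hKnn boundΞd cbu₂ cbu₂
  have hbound : ∀ J : ℝ, J ≤ 1088 * SM * nrm * (nrm ^ 2 + nrm ^ 2) / 2 →
      J ≤ 1088 * SM * nrm ^ 3 := by
    intro J hJ
    have : 1088 * SM * nrm * (nrm ^ 2 + nrm ^ 2) / 2 = 1088 * SM * nrm ^ 3 := by ring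
    linarith [hJ, this.le]
  have hQA' : |∫ x in unitSq,
      ((pd₂ (pd₂ (pd₁ F)) x * dz₁ (dz₂ (A₁ a)) (x, gradc F x) + pd₂ (pd₁ F) x * Cd₁ x) +
       (pd₂ (pd₂ (pd₂ F)) x * dz₂ (dz₂ (A₁ a)) (x, gradc F x) + pd₂ (pd₂ F) x * Cd₂ x)) *
      (pd₂^[n] (pd₁ F) x * pd₂^[n] (pd₂ F) x)| ≤ 1088 * SM * nrm ^ 3 := by
    refine hbound _ (le_trans hQA ?_)
    have h := mul_le_mul_of_nonneg_left (add_le_add hL1 hL2) hKnn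
    linarith [h]
  have hQB' : |∫ x in unitSq,
      ((pd₂ (pd₂ (pd₁ F)) x * dz₁ (dz₁ (A₁ a)) (x, gradc F x) + pd₂ (pd₁ F) x * Cd₃ x) +
       (pd₂ (pd₂ (pd₂ F)) x * dz₂ (dz₁ (A₁ a)) (x, gradc F x) + pd₂ (pd₂ F) x * Cd₄ x)) *
      (pd₂^[n] (pd₁ F) x * pd₂^[n] (pd₁ F) x)| ≤ 1088 * SM * nrm ^ 3 := by
    refine hbound _ (le_trans hQB ?_)
    have h := mul_le_mul_of_nonneg_left (add_le_add hL1 hL1) hKnn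
    linarith [h]
  have hQC' : |∫ x in unitSq,
      ((pd₂ (pd₂ (pd₁ F)) x * dz₁ (dz₂ (A₂ a)) (x, gradc F x) + pd₂ (pd₁ F) x * Cd₅ x) +
       (pd₂ (pd₂ (pd₂ F)) x * dz₂ (dz₂ (A₂ a)) (x, gradc F x) + pd₂ (pd₂ F) x * Cd₆ x)) *
      (pd₂^[n] (pd₂ F) x * pd₂^[n] (pd₂ F) x)| ≤ 1088 * SM * nrm ^ 3 := by
    refine hbound _ (le_trans hQC ?_)
    have h := mul_le_mul_of_nonneg_left (add_le_add hL2 hL2) hKnn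
    linarith [h]
  -- conclusion
  rw [hI₂eq, hI₃eq]
  set IA := ∫ x in unitSq,
      ((pd₂ (pd₂ (pd₁ F)) x * dz₁ (dz₂ (A₁ a)) (x, gradc F x) + pd₂ (pd₁ F) x * Cd₁ x) +
       (pd₂ (pd₂ (pd₂ F)) x * dz₂ (dz₂ (A₁ a)) (x, gradc F x) + pd₂ (pd₂ F) x * Cd₂ x)) *
      (pd₂^[n] (pd₁ F) x * pd₂^[n] (pd₂ F) x) with hIAdef
  set IB := ∫ x in unitSq,
      ((pd₂ (pd₂ (pd₁ F)) x * dz₁ (dz₁ (A₁ a)) (x, gradc F x) + pd₂ (pd₁ F) x * Cd₃ x) +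
       (pd₂ (pd₂ (pd₂ F)) x * dz₂ (dz₁ (A₁ a)) (x, gradc F x) + pd₂ (pd₂ F) x * Cd₄ x)) *
      (pd₂^[n] (pd₁ F) x * pd₂^[n] (pd₁ F) x) with hIBdef
  set IC := ∫ x in unitSq,
      ((pd₂ (pd₂ (pd₁ F)) x * dz₁ (dz₂ (A₂ a)) (x, gradc F x) + pd₂ (pd₁ F) x * Cd₅ x) +
       (pd₂ (pd₂ (pd₂ F)) x * dz₂ (dz₂ (A₂ a)) (x, gradc F x) + pd₂ (pd₂ F) x * Cd₆ x)) *
      (pd₂^[n] (pd₂ F) x * pd₂^[n] (pd₂ F) x) with hICdef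
  clear_value IA IB IC
  have hr0 : (0:ℝ) ≤ ((n+1:ℕ):ℝ) := Nat.cast_nonneg _
  have htri : |((n+1:ℕ):ℝ) * (-IA) + ((n+1:ℕ):ℝ) * ((-IB) / 2 + (-IC) / 2)| ≤
      ((n+1:ℕ):ℝ) * |IA| + ((n+1:ℕ):ℝ) * (|IB| / 2 + |IC| / 2) := by
    calc |((n+1:ℕ):ℝ) * (-IA) + ((n+1:ℕ):ℝ) * ((-IB) / 2 + (-IC) / 2)|
        ≤ |((n+1:ℕ):ℝ) * (-IA)| + |((n+1:ℕ):ℝ) * ((-IB) / 2 + (-IC) / 2)| := abs_add_le _ _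
      _ ≤ ((n+1:ℕ):ℝ) * |IA| + ((n+1:ℕ):ℝ) * (|IB| / 2 + |IC| / 2) := by
          rw [abs_mul, abs_mul, abs_neg, abs_of_nonneg hr0]
          refine add_le_add le_rfl (mul_le_mul_of_nonneg_left ?_ hr0)
          calc |(-IB) / 2 + (-IC) / 2| ≤ |(-IB) / 2| + |(-IC) / 2| := abs_add_le _ _
            _ = |IB| / 2 + |IC| / 2 := by rw [abs_div, abs_div, abs_neg, abs_neg]; norm_num
  refine le_trans htri ?_
  have hcast : ((n+1:ℕ):ℝ) = (n:ℝ) + 1 := by push_cast; ring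
  have h1 : ((n+1:ℕ):ℝ) * |IA| ≤ ((n:ℝ)+1) * (1088 * SM * nrm ^ 3) := by
    rw [hcast]
    exact mul_le_mul_of_nonneg_left hQA' (by positivity)
  have h2 : ((n+1:ℕ):ℝ) * (|IB| / 2 + |IC| / 2) ≤ ((n:ℝ)+1) * (1088 * SM * nrm ^ 3) := by
    rw [hcast]
    refine mul_le_mul_of_nonneg_left ?_ (by positivity)
    linarith [hQB', hQC']
  calc ((n+1:ℕ):ℝ) * |IA| + ((n+1:ℕ):ℝ) * (|IB| / 2 + |IC| / 2)
      ≤ ((n:ℝ)+1) * (1088 * SM * nrm ^ 3) + ((n:ℝ)+1) * (1088 * SM * nrm ^ 3) :=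
        add_le_add h1 h2
    _ = 2176 * ((n:ℝ) + 1) * SM * nrm ^ 3 := by ring
    _ ≤ 2176 * ((n:ℝ) + 1) * SM * nrm ^ 3 := le_rfl






end
end
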